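/- arXiv:2503.09254 — 3 statements merged into one kernel-verified Lean document; each statement's English description precedes it below -/
import Mathlib

section
/- Let < be a term ordering, ω ∈ ℝ^n_{≥0}, and <_ω the refinement of ω by <. Then for every nonzero polynomial f, in_{<_ω}(f) = in_<(in_ω(f)); consequently in_{<_ω}(I) = in_<(in_ω(I)) for every ideal I. -/
open MvPolynomial

/-- A term ordering on the monomials (exponent vectors) of `k[x_1, …, x_n]`:
a strict total well-ordering compatible with addition of exponents. -/
structure TermOrder (n : ℕ) where
  lt : (Fin n →₀ ℕ) → (Fin n →₀ ℕ) → Prop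
  irrefl : ∀ a, ¬ lt a a
  trans : ∀ a b c, lt a b → lt b c → lt a c
  trichotomous : ∀ a b, lt a b ∨ a = b ∨ lt b a
  wf : WellFounded lt
  add_right : ∀ a b c, lt a b → lt (a + c) (b + c)

variable {n : ℕ}

/-- `α` is the exponent vector of the `t`-leading term of `f`. -/
def TermOrder.IsLeadExp {k : Type*} [CommSemiring k] (t : TermOrder n)
    (f : MvPolynomial (Fin n) k) (α : Fin n →₀ ℕ) : Prop :=
  α ∈ f.support ∧ ∀ β ∈ f.support, β ≠ α → t.lt β α

open Classical in
/-- The exponent vector of the `t`-leading term of `f` (junk value `0` if none exists). -/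
noncomputable def TermOrder.leadExp {k : Type*} [CommSemiring k] (t : TermOrder n)
    (f : MvPolynomial (Fin n) k) : Fin n →₀ ℕ :=
  if h : ∃ α, t.IsLeadExp f α then h.choose else 0

/-- The leading term `in_t(f)` of `f` with respect to the term ordering `t`. -/
noncomputable def TermOrder.leadTerm {k : Type*} [CommSemiring k] (t : TermOrder n)
    (f : MvPolynomial (Fin n) k) : MvPolynomial (Fin n) k :=
  monomial (t.leadExp f) (coeff (t.leadExp f) f)

/-- The initial ideal `in_t(I)` of `I` with respect to the term ordering `t`. -/
noncomputable def initialIdealT {k : Type*} [CommSemiring k] (t : TermOrder n)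
    (I : Ideal (MvPolynomial (Fin n) k)) : Ideal (MvPolynomial (Fin n) k) :=
  Ideal.span { p | ∃ f ∈ I, f ≠ 0 ∧ p = t.leadTerm f }

/-- The `ω`-weight `⟨ω, α⟩` of an exponent vector `α`. -/
noncomputable def wt (ω : Fin n → ℝ) (α : Fin n →₀ ℕ) : ℝ :=
  ∑ i, ω i * (α i : ℝ)

/-- The initial form `in_ω(f)`: the sum of the terms of `f` of maximal `ω`-weight. -/
noncomputable def initialForm {k : Type*} [CommSemiring k] (ω : Fin n → ℝ)
    (f : MvPolynomial (Fin n) k) : MvPolynomial (Fin n) k :=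
  ∑ α ∈ f.support.filter (fun α => ∀ β ∈ f.support, wt ω β ≤ wt ω α),
    monomial α (coeff α f)

/-- The generalized initial ideal `in_ω(I)` of `I` with respect to the weight vector `ω`. -/
noncomputable def initialIdealW {k : Type*} [CommSemiring k] (ω : Fin n → ℝ)
    (I : Ideal (MvPolynomial (Fin n) k)) : Ideal (MvPolynomial (Fin n) k) :=
  Ideal.span { p | ∃ f ∈ I, f ≠ 0 ∧ p = initialForm ω f }

/-- The refinement `<_ω` of the weight vector `ω` by the term ordering `t`:
compare first by `ω`-weight, break ties with `t`. -/
def refineLt (ω : Fin n → ℝ) (t : TermOrder n) (α β : Fin n →₀ ℕ) : Prop :=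
  wt ω α < wt ω β ∨ (wt ω α = wt ω β ∧ t.lt α β)

/-- `G` is a Gröbner basis of `I` w.r.t. `t`: `G ⊆ I` and the leading terms of the
elements of `G` generate the initial ideal `in_t(I)`. -/
def IsGroebnerBasis {k : Type*} [CommSemiring k] (t : TermOrder n)
    (I : Ideal (MvPolynomial (Fin n) k)) (G : Finset (MvPolynomial (Fin n) k)) : Prop :=
  (∀ g ∈ G, g ∈ I) ∧
    Ideal.span ((fun g => t.leadTerm g) '' (G : Set (MvPolynomial (Fin n) k)))
      = initialIdealT t I

open Classical in
/-- `G` is the reduced (marked) Gröbner basis of `I` w.r.t. `t`: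
a Gröbner basis that is minimal, monic and reduced. -/
def IsReducedGB {k : Type*} [CommSemiring k] (t : TermOrder n)
    (I : Ideal (MvPolynomial (Fin n) k)) (G : Finset (MvPolynomial (Fin n) k)) : Prop :=
  IsGroebnerBasis t I G ∧
  (∀ g ∈ G, coeff (t.leadExp g) g = 1) ∧
  (∀ g ∈ G, ∀ g' ∈ G, g ≠ g' → ∀ α ∈ g.support, ¬ t.leadExp g' ≤ α) ∧
  (∀ g ∈ G, ¬ IsGroebnerBasis t I (G.erase g))

section Aux

variable {n : ℕ} {k : Type*}

namespace TermOrder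

lemma asymm (t : TermOrder n) {a b : Fin n →₀ ℕ} (h : t.lt a b) (h' : t.lt b a) : False :=
  t.irrefl a (t.trans _ _ _ h h')

lemma exists_max (t : TermOrder n) (s : Finset (Fin n →₀ ℕ)) (hs : s.Nonempty) :
    ∃ α ∈ s, ∀ β ∈ s, β ≠ α → t.lt β α := by
  classical
  induction s using Finset.induction_on with
  | empty => exact absurd hs (by simp)
  | @insert a s' ha ih =>
    rcases s'.eq_empty_or_nonempty with rfl | hs'
    · exact ⟨a, by simp, by simp⟩
    · obtain ⟨α, hα, hmax⟩ := ih hs'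
      rcases t.trichotomous a α with h | h | h
      · refine ⟨α, Finset.mem_insert_of_mem hα, ?_⟩
        intro β hβ hne
        rcases Finset.mem_insert.mp hβ with rfl | hβ'
        · exact h
        · exact hmax β hβ' hne
      · subst h
        refine ⟨a, Finset.mem_insert_self _ _, ?_⟩
        intro β hβ hne
        rcases Finset.mem_insert.mp hβ with rfl | hβ'
        · exact absurd rfl hne
        · exact hmax β hβ' hne
      · refine ⟨a, Finset.mem_insert_self _ _, ?_⟩
        intro β hβ hne
        rcases Finset.mem_insert.mp hβ with rfl | hβ'
        · exact absurd rfl hne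
        · rcases eq_or_ne β α with rfl | hβα
          · exact h
          · exact t.trans _ _ _ (hmax β hβ' hβα) h

variable [CommSemiring k]

lemma isLeadExp_unique (t : TermOrder n) {f : MvPolynomial (Fin n) k}
    {α β : Fin n →₀ ℕ} (h1 : t.IsLeadExp f α) (h2 : t.IsLeadExp f β) : α = β := by
  by_contra hne
  exact t.asymm (h1.2 β h2.1 (fun h => hne h.symm)) (h2.2 α h1.1 hne)

lemma exists_isLeadExp (t : TermOrder n) {f : MvPolynomial (Fin n) k} (hf : f ≠ 0) :
    ∃ α, t.IsLeadExp f α := by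
  obtain ⟨α, hα, hmax⟩ := t.exists_max f.support (MvPolynomial.support_nonempty.mpr hf)
  exact ⟨α, hα, hmax⟩

lemma isLeadExp_leadExp (t : TermOrder n) {f : MvPolynomial (Fin n) k} (hf : f ≠ 0) :
    t.IsLeadExp f (t.leadExp f) := by
  have h : ∃ α, t.IsLeadExp f α := t.exists_isLeadExp hf
  rw [TermOrder.leadExp, dif_pos h]
  exact h.choose_spec

lemma leadExp_eq_of (t : TermOrder n) {f : MvPolynomial (Fin n) k} {α : Fin n →₀ ℕ}
    (h : t.IsLeadExp f α) : t.leadExp f = α := by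
  have hf : f ≠ 0 := by
    intro h0
    rw [h0] at h
    simpa using h.1
  exact t.isLeadExp_unique (t.isLeadExp_leadExp hf) h

lemma mem_support_leadExp (t : TermOrder n) {f : MvPolynomial (Fin n) k} (hf : f ≠ 0) :
    t.leadExp f ∈ f.support := (t.isLeadExp_leadExp hf).1

end TermOrder

lemma wt_add (ω : Fin n → ℝ) (a b : Fin n →₀ ℕ) : wt ω (a + b) = wt ω a + wt ω b := by
  rw [wt, wt, wt, ← Finset.sum_add_distrib]
  refine Finset.sum_congr rfl fun i _ => ?_
  rw [Finsupp.add_apply]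
  push_cast
  ring

lemma wt_tsub (ω : Fin n → ℝ) {m β : Fin n →₀ ℕ} (h : m ≤ β) :
    wt ω (β - m) = wt ω β - wt ω m := by
  have h2 := wt_add ω (β - m) m
  rw [tsub_add_cancel_of_le h] at h2
  linarith

end Aux
section Aux2

variable {n : ℕ} {k : Type*} [CommSemiring k]

lemma coeff_initialForm (ω : Fin n → ℝ) (f : MvPolynomial (Fin n) k) (α : Fin n →₀ ℕ) :
    coeff α (initialForm ω f) =
      if ∀ β ∈ f.support, wt ω β ≤ wt ω α then coeff α f else 0 := by
  classical
  rw [initialForm, MvPolynomial.coeff_sum]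
  simp only [coeff_monomial]
  rw [Finset.sum_ite_eq' _ α (fun γ => coeff γ f)]
  by_cases hc : ∀ β ∈ f.support, wt ω β ≤ wt ω α
  · by_cases hα : α ∈ f.support
    · rw [if_pos (Finset.mem_filter.mpr ⟨hα, hc⟩), if_pos hc]
    · rw [if_neg (fun h => hα (Finset.mem_filter.mp h).1), if_pos hc,
        MvPolynomial.notMem_support_iff.mp hα]
  · rw [if_neg (fun h => hc (Finset.mem_filter.mp h).2), if_neg hc]

lemma mem_support_initialForm {ω : Fin n → ℝ} {f : MvPolynomial (Fin n) k} {β : Fin n →₀ ℕ} :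
    β ∈ (initialForm ω f).support ↔
      β ∈ f.support ∧ ∀ γ ∈ f.support, wt ω γ ≤ wt ω β := by
  rw [MvPolynomial.mem_support_iff, coeff_initialForm]
  constructor
  · intro h
    by_cases hc : ∀ γ ∈ f.support, wt ω γ ≤ wt ω β
    · rw [if_pos hc] at h
      exact ⟨MvPolynomial.mem_support_iff.mpr h, hc⟩
    · rw [if_neg hc] at h
      exact absurd rfl h
  · intro ⟨h1, h2⟩
    rw [if_pos h2]
    exact MvPolynomial.mem_support_iff.mp h1

lemma initialForm_zero (ω : Fin n → ℝ) : initialForm ω (0 : MvPolynomial (Fin n) k) = 0 := by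
  simp [initialForm]

lemma initialForm_ne_zero {ω : Fin n → ℝ} {f : MvPolynomial (Fin n) k} (hf : f ≠ 0) :
    initialForm ω f ≠ 0 := by
  obtain ⟨α, hα, hmax⟩ := f.support.exists_max_image (wt ω)
    (MvPolynomial.support_nonempty.mpr hf)
  intro h0
  have : α ∈ (initialForm ω f).support := mem_support_initialForm.mpr ⟨hα, hmax⟩
  rw [h0] at this
  simpa using this

/-- Part 1 core: the `t'`-leading exponent of `f` is the `t`-leading exponent of `in_ω f`. -/
lemma isLeadExp_initialForm (t t' : TermOrder n) (ω : Fin n → ℝ)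
    (ht' : t'.lt = refineLt ω t) {f : MvPolynomial (Fin n) k} (hf : f ≠ 0) :
    t.IsLeadExp (initialForm ω f) (t'.leadExp f) := by
  obtain ⟨hmem, hmax⟩ := t'.isLeadExp_leadExp hf
  set α := t'.leadExp f with hα
  have hw : ∀ β ∈ f.support, wt ω β ≤ wt ω α := by
    intro β hβ
    by_contra hlt
    push_neg at hlt
    rcases eq_or_ne β α with rfl | hne
    · exact absurd rfl (ne_of_lt hlt)
    · have h1 : t'.lt β α := hmax β hβ hne
      have h2 : t'.lt α β := by rw [ht']; exact Or.inl hlt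
      exact t'.asymm h1 h2
  refine ⟨mem_support_initialForm.mpr ⟨hmem, hw⟩, ?_⟩
  intro β hβ hne
  rw [mem_support_initialForm] at hβ
  have h1 : t'.lt β α := hmax β hβ.1 hne
  rw [ht'] at h1
  rcases h1 with h | h
  · exact absurd (hβ.2 α hmem) (not_le.mpr h)
  · exact h.2

lemma leadExp_initialForm (t t' : TermOrder n) (ω : Fin n → ℝ)
    (ht' : t'.lt = refineLt ω t) {f : MvPolynomial (Fin n) k} (hf : f ≠ 0) :
    t.leadExp (initialForm ω f) = t'.leadExp f :=
  t.leadExp_eq_of (isLeadExp_initialForm t t' ω ht' hf)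

lemma leadTerm_initialForm (t t' : TermOrder n) (ω : Fin n → ℝ)
    (ht' : t'.lt = refineLt ω t) {f : MvPolynomial (Fin n) k} (hf : f ≠ 0) :
    t'.leadTerm f = t.leadTerm (initialForm ω f) := by
  rw [TermOrder.leadTerm, TermOrder.leadTerm, leadExp_initialForm t t' ω ht' hf]
  congr 1
  have h := (isLeadExp_initialForm t t' ω ht' hf).1
  rw [mem_support_initialForm] at h
  rw [coeff_initialForm, if_pos h.2]

end Aux2
section Aux3

variable {n : ℕ} {k : Type*}

/-- The `w`-graded piece of a polynomial w.r.t. the weight `ω`. -/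
noncomputable def piW [CommSemiring k] (ω : Fin n → ℝ) (w : ℝ) (f : MvPolynomial (Fin n) k) :
    MvPolynomial (Fin n) k :=
  ∑ α ∈ f.support.filter (fun α => wt ω α = w), monomial α (coeff α f)

variable [CommSemiring k]

lemma coeff_piW (ω : Fin n → ℝ) (w : ℝ) (f : MvPolynomial (Fin n) k) (α : Fin n →₀ ℕ) :
    coeff α (piW ω w f) = if wt ω α = w then coeff α f else 0 := by
  classical
  rw [piW, MvPolynomial.coeff_sum]
  simp only [coeff_monomial]
  rw [Finset.sum_ite_eq' _ α (fun γ => coeff γ f)]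
  by_cases hc : wt ω α = w
  · by_cases hα : α ∈ f.support
    · rw [if_pos (Finset.mem_filter.mpr ⟨hα, hc⟩), if_pos hc]
    · rw [if_neg (fun h => hα (Finset.mem_filter.mp h).1), if_pos hc,
        MvPolynomial.notMem_support_iff.mp hα]
  · rw [if_neg (fun h : α ∈ _ => hc (Finset.mem_filter.mp h).2), if_neg hc]

lemma piW_add (ω : Fin n → ℝ) (w : ℝ) (f g : MvPolynomial (Fin n) k) :
    piW ω w (f + g) = piW ω w f + piW ω w g := by
  apply MvPolynomial.ext
  intro α
  rw [MvPolynomial.coeff_add, coeff_piW, coeff_piW, coeff_piW, MvPolynomial.coeff_add]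
  split_ifs <;> simp

lemma piW_smul (ω : Fin n → ℝ) (w : ℝ) (c : k) (f : MvPolynomial (Fin n) k) :
    piW ω w (c • f) = c • piW ω w f := by
  apply MvPolynomial.ext
  intro α
  rw [MvPolynomial.coeff_smul, coeff_piW, coeff_piW, MvPolynomial.coeff_smul]
  split_ifs <;> simp

/-- `piW` as a linear map. -/
noncomputable def piWl (ω : Fin n → ℝ) (w : ℝ) :
    MvPolynomial (Fin n) k →ₗ[k] MvPolynomial (Fin n) k where
  toFun := piW ω w
  map_add' := piW_add ω w
  map_smul' := piW_smul ω w

lemma piW_sum (ω : Fin n → ℝ) (w : ℝ) {ι : Type*} (s : Finset ι)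
    (f : ι → MvPolynomial (Fin n) k) :
    piW ω w (∑ i ∈ s, f i) = ∑ i ∈ s, piW ω w (f i) :=
  map_sum (piWl ω w) f s

lemma piW_mul_monomial (ω : Fin n → ℝ) (w : ℝ) (f : MvPolynomial (Fin n) k)
    (m : Fin n →₀ ℕ) (c : k) :
    piW ω w (f * monomial m c) = piW ω (w - wt ω m) f * monomial m c := by
  apply MvPolynomial.ext
  intro β
  rw [coeff_piW, MvPolynomial.coeff_mul_monomial', MvPolynomial.coeff_mul_monomial', coeff_piW]
  by_cases hm : m ≤ β
  · rw [if_pos hm, if_pos hm]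
    have hwt : wt ω (β - m) = wt ω β - wt ω m := wt_tsub ω hm
    by_cases hw : wt ω β = w
    · rw [if_pos hw, if_pos (by rw [hwt, hw])]
    · rw [if_neg hw, if_neg (fun h => hw (by rw [hwt] at h; linarith)), zero_mul]
  · rw [if_neg hm, if_neg hm, ite_self]

end Aux3
section Aux4

variable {n : ℕ} {k : Type*} [Field k]

/-- The set of `ω`-initial forms of elements of `I` that are `ω`-homogeneous of weight `w`. -/
def Sset (ω : Fin n → ℝ) (I : Ideal (MvPolynomial (Fin n) k)) (w : ℝ) :
    Set (MvPolynomial (Fin n) k) :=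
  {p | ∃ g ∈ I, g ≠ 0 ∧ p = initialForm ω g ∧ ∀ β ∈ p.support, wt ω β = w}

lemma mem_support_mul_monomial {f : MvPolynomial (Fin n) k} {m β : Fin n →₀ ℕ} {c : k}
    (hc : c ≠ 0) :
    β ∈ (f * monomial m c).support ↔ m ≤ β ∧ β - m ∈ f.support := by
  rw [MvPolynomial.mem_support_iff, MvPolynomial.coeff_mul_monomial']
  by_cases h : m ≤ β
  · rw [if_pos h]
    simp [h, hc, MvPolynomial.mem_support_iff]
  · rw [if_neg h]
    simp [h]

lemma initialForm_mul_monomial (ω : Fin n → ℝ) {g : MvPolynomial (Fin n) k}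
    {m : Fin n →₀ ℕ} {c : k} (hc : c ≠ 0) :
    initialForm ω (g * monomial m c) = initialForm ω g * monomial m c := by
  apply MvPolynomial.ext
  intro β
  rw [coeff_initialForm, MvPolynomial.coeff_mul_monomial', MvPolynomial.coeff_mul_monomial',
    coeff_initialForm]
  by_cases hm : m ≤ β
  · rw [if_pos hm, if_pos hm]
    have hwt : wt ω (β - m) = wt ω β - wt ω m := wt_tsub ω hm
    have hcond : (∀ γ ∈ (g * monomial m c).support, wt ω γ ≤ wt ω β) ↔
        ∀ δ ∈ g.support, wt ω δ ≤ wt ω (β - m) := by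
      constructor
      · intro h δ hδ
        have h1 := h (δ + m) ((mem_support_mul_monomial hc).mpr
          ⟨le_add_self, by rwa [add_tsub_cancel_right]⟩)
        have h2 := wt_add ω δ m
        linarith
      · intro h γ hγ
        rw [mem_support_mul_monomial hc] at hγ
        have h1 := h _ hγ.2
        have h2 := wt_add ω (γ - m) m
        rw [tsub_add_cancel_of_le hγ.1] at h2
        linarith
    by_cases hcnd : ∀ δ ∈ g.support, wt ω δ ≤ wt ω (β - m)
    · rw [if_pos (hcond.mpr hcnd), if_pos hcnd]
    · rw [if_neg (fun hh => hcnd (hcond.mp hh)), if_neg hcnd, zero_mul]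
  · rw [if_neg hm, if_neg hm, ite_self]

lemma Sset_mul_monomial {ω : Fin n → ℝ} {I : Ideal (MvPolynomial (Fin n) k)} {w : ℝ}
    {p : MvPolynomial (Fin n) k} (hp : p ∈ Sset ω I w) {m : Fin n →₀ ℕ} {c : k} (hc : c ≠ 0) :
    p * monomial m c ∈ Sset ω I (w + wt ω m) := by
  obtain ⟨g, hgI, hg0, rfl, hhom⟩ := hp
  refine ⟨g * monomial m c, Ideal.mul_mem_right _ _ hgI,
    mul_ne_zero hg0 (by rwa [Ne, MvPolynomial.monomial_eq_zero]),
    (initialForm_mul_monomial ω hc).symm, ?_⟩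
  intro β hβ
  rw [mem_support_mul_monomial hc] at hβ
  have h1 := hhom _ hβ.2
  have h2 := wt_add ω (β - m) m
  rw [tsub_add_cancel_of_le hβ.1] at h2
  linarith

/-- Elements of `Sset` are nonzero. -/
lemma Sset_ne_zero {ω : Fin n → ℝ} {I : Ideal (MvPolynomial (Fin n) k)} {w : ℝ}
    {p : MvPolynomial (Fin n) k} (hp : p ∈ Sset ω I w) : p ≠ 0 := by
  obtain ⟨g, _, hg0, rfl, _⟩ := hp
  exact initialForm_ne_zero hg0

/-- For `p = in_ω g ∈ Sset ω I w`, all weights of `g` are at most `w`. -/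
lemma Sset_wt_le {ω : Fin n → ℝ} {w : ℝ} {g p : MvPolynomial (Fin n) k}
    (hg0 : g ≠ 0) (hp : p = initialForm ω g) (hhom : ∀ β ∈ p.support, wt ω β = w) :
    ∀ β ∈ g.support, wt ω β ≤ w := by
  obtain ⟨α, hα, hmax⟩ := g.support.exists_max_image (wt ω)
    (MvPolynomial.support_nonempty.mpr hg0)
  have hαp : α ∈ p.support := by rw [hp]; exact mem_support_initialForm.mpr ⟨hα, hmax⟩
  intro β hβ
  calc wt ω β ≤ wt ω α := hmax β hβ
    _ = w := hhom α hαp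

/-- Lemma C: `Sset` is closed under nonvanishing elementary reductions. -/
lemma Sset_sub_smul {ω : Fin n → ℝ} {I : Ideal (MvPolynomial (Fin n) k)} {w : ℝ}
    {p₁ p₂ : MvPolynomial (Fin n) k} (h1 : p₁ ∈ Sset ω I w) (h2 : p₂ ∈ Sset ω I w)
    (μ : k) (hne : p₁ - μ • p₂ ≠ 0) : p₁ - μ • p₂ ∈ Sset ω I w := by
  obtain ⟨g₁, hg₁I, hg₁0, hp₁, hhom₁⟩ := h1
  obtain ⟨g₂, hg₂I, hg₂0, hp₂, hhom₂⟩ := h2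
  have hle₁ := Sset_wt_le hg₁0 hp₁ hhom₁
  have hle₂ := Sset_wt_le hg₂0 hp₂ hhom₂
  set g : MvPolynomial (Fin n) k := g₁ - μ • g₂ with hg
  set D : MvPolynomial (Fin n) k := p₁ - μ • p₂ with hD
  -- coefficients of g
  have hcoeffg : ∀ β, coeff β g = coeff β g₁ - μ * coeff β g₂ := by
    intro β
    rw [hg, MvPolynomial.coeff_sub, MvPolynomial.coeff_smul, smul_eq_mul]
  have hcoeffD : ∀ β, coeff β D = coeff β p₁ - μ * coeff β p₂ := by
    intro β
    rw [hD, MvPolynomial.coeff_sub, MvPolynomial.coeff_smul, smul_eq_mul]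
  -- all weights of g are at most w
  have hgle : ∀ β ∈ g.support, wt ω β ≤ w := by
    intro β hβ
    rw [MvPolynomial.mem_support_iff, hcoeffg] at hβ
    by_cases hb1 : coeff β g₁ = 0
    · have hb2 : coeff β g₂ ≠ 0 := by
        intro hb2; rw [hb1, hb2] at hβ; simp at hβ
      exact hle₂ β (MvPolynomial.mem_support_iff.mpr hb2)
    · exact hle₁ β (MvPolynomial.mem_support_iff.mpr hb1)
  -- at weight w, coefficients of the initial forms agree with those of g_i
  have hcw : ∀ β, wt ω β = w → coeff β D = coeff β g := by
    intro β hβ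
    rw [hcoeffD, hcoeffg, hp₁, hp₂, coeff_initialForm, coeff_initialForm,
      if_pos (fun γ hγ => by rw [hβ]; exact hle₁ γ hγ),
      if_pos (fun γ hγ => by rw [hβ]; exact hle₂ γ hγ)]
  -- all weights of D are exactly w
  have hDhom : ∀ β ∈ D.support, wt ω β = w := by
    intro β hβ
    rw [MvPolynomial.mem_support_iff, hcoeffD] at hβ
    by_cases hb1 : coeff β p₁ = 0
    · have hb2 : coeff β p₂ ≠ 0 := by
        intro hb2; rw [hb1, hb2] at hβ; simp at hβ
      exact hhom₂ β (MvPolynomial.mem_support_iff.mpr hb2)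
    · exact hhom₁ β (MvPolynomial.mem_support_iff.mpr hb1)
  -- D has a support element, of weight w, which lies in the support of g
  obtain ⟨δ, hδ⟩ : ∃ δ, δ ∈ D.support := by
    obtain ⟨δ, hδ⟩ := MvPolynomial.support_nonempty.mpr hne
    exact ⟨δ, hδ⟩
  have hδw : wt ω δ = w := hDhom δ hδ
  have hδg : δ ∈ g.support := by
    rw [MvPolynomial.mem_support_iff, ← hcw δ hδw]
    exact MvPolynomial.mem_support_iff.mp hδ
  -- initialForm ω g = D
  have hmain : initialForm ω g = D := by
    apply MvPolynomial.ext
    intro β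
    rw [coeff_initialForm]
    by_cases hβw : wt ω β = w
    · rw [if_pos (fun γ hγ => by rw [hβw]; exact hgle γ hγ), hcw β hβw]
    · rw [MvPolynomial.notMem_support_iff.mp (fun h => hβw (hDhom β h))]
      by_cases hcond : ∀ γ ∈ g.support, wt ω γ ≤ wt ω β
      · rw [if_pos hcond]
        by_contra hβg
        have hβmem : β ∈ g.support := MvPolynomial.mem_support_iff.mpr hβg
        have h1 : w ≤ wt ω β := (hδw ▸ hcond δ hδg)
        have h2 : wt ω β ≤ w := hgle β hβmem
        exact hβw (le_antisymm h2 h1)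
      · rw [if_neg hcond]
  have hg0 : g ≠ 0 := by
    intro h0
    rw [h0, initialForm_zero] at hmain
    exact hne hmain.symm
  have hgI : g ∈ I := by
    rw [hg, MvPolynomial.smul_eq_C_mul]
    exact Submodule.sub_mem _ hg₁I (Ideal.mul_mem_left _ _ hg₂I)
  exact ⟨g, hgI, hg0, hmain.symm, hDhom⟩

end Aux4
section Aux5

variable {n : ℕ} {k : Type*} [Field k]

/-- Lemma D: graded pieces of elements of `in_ω(I)` lie in the span of `Sset ω I w`. -/
lemma piW_mem_span (ω : Fin n → ℝ) (I : Ideal (MvPolynomial (Fin n) k))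
    {h : MvPolynomial (Fin n) k} (hh : h ∈ initialIdealW ω I) (w : ℝ) :
    piW ω w h ∈ Submodule.span k (Sset ω I w) := by
  revert w
  refine Submodule.span_induction
    (p := fun q _ => ∀ w, piW ω w q ∈ Submodule.span k (Sset ω I w)) ?_ ?_ ?_ ?_ hh
  · rintro p ⟨g, hgI, hg0, rfl⟩ w
    by_cases hex : ∃ β ∈ (initialForm ω g).support, wt ω β = w
    · obtain ⟨β, hβ, hβw⟩ := hex
      have hhom : ∀ γ ∈ (initialForm ω g).support, wt ω γ = w := by
        intro γ hγ
        rw [mem_support_initialForm] at hγ hβ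
        have h1 := hγ.2 β hβ.1
        have h2 := hβ.2 γ hγ.1
        linarith
      have heq : piW ω w (initialForm ω g) = initialForm ω g := by
        apply MvPolynomial.ext
        intro α
        rw [coeff_piW]
        by_cases hα : wt ω α = w
        · rw [if_pos hα]
        · rw [if_neg hα]
          by_contra hc
          exact hα (hhom α (MvPolynomial.mem_support_iff.mpr (fun h => hc h.symm)))
      rw [heq]
      exact Submodule.subset_span ⟨g, hgI, hg0, rfl, hhom⟩
    · have heq : piW ω w (initialForm ω g) = 0 := by
        apply MvPolynomial.ext
        intro α
        rw [coeff_piW, MvPolynomial.coeff_zero]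
        by_cases hα : wt ω α = w
        · rw [if_pos hα]
          by_contra hc
          exact hex ⟨α, MvPolynomial.mem_support_iff.mpr hc, hα⟩
        · rw [if_neg hα]
      rw [heq]
      exact Submodule.zero_mem _
  · intro w
    have : piW ω w (0 : MvPolynomial (Fin n) k) = 0 := by simp [piW]
    rw [this]
    exact Submodule.zero_mem _
  · intro x y _ _ ihx ihy w
    rw [piW_add]
    exact Submodule.add_mem _ (ihx w) (ihy w)
  · intro a x _ ih w
    rw [smul_eq_mul]
    have ha : a * x = ∑ m ∈ a.support, monomial m (coeff m a) * x := by
      conv_lhs => rw [← a.support_sum_monomial_coeff]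
      rw [Finset.sum_mul]
    rw [ha, piW_sum]
    refine Submodule.sum_mem _ fun m hm => ?_
    have hc : coeff m a ≠ 0 := MvPolynomial.mem_support_iff.mp hm
    rw [mul_comm, piW_mul_monomial]
    have h1 : piW ω (w - wt ω m) x ∈ Submodule.span k (Sset ω I (w - wt ω m)) := ih _
    have h2 : piW ω (w - wt ω m) x * monomial m (coeff m a) ∈
        Submodule.map (LinearMap.mulRight k (monomial m (coeff m a)))
          (Submodule.span k (Sset ω I (w - wt ω m))) := ⟨_, h1, rfl⟩
    rw [Submodule.map_span] at h2
    refine Submodule.span_le.mpr ?_ h2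
    rintro q ⟨p, hp, rfl⟩
    have := Sset_mul_monomial (m := m) hp hc
    rw [sub_add_cancel] at this
    exact Submodule.subset_span this

end Aux5
section Aux6

variable {n : ℕ} {k : Type*} [Field k]

lemma lsum_coeff (L : List (k × MvPolynomial (Fin n) k)) (β : Fin n →₀ ℕ) :
    coeff β (L.map fun x => x.1 • x.2).sum = (L.map fun x => x.1 * coeff β x.2).sum := by
  induction L with
  | nil => simp
  | cons a L ih =>
    simp only [List.map_cons, List.sum_cons, MvPolynomial.coeff_add, MvPolynomial.coeff_smul,
      smul_eq_mul, ih]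

lemma lsum_filter (p : k × MvPolynomial (Fin n) k → Bool)
    (hp : ∀ x, p x = false → x.1 • x.2 = (0 : MvPolynomial (Fin n) k)) :
    ∀ L : List (k × MvPolynomial (Fin n) k),
      ((L.filter p).map fun x => x.1 • x.2).sum = (L.map fun x => x.1 • x.2).sum := by
  intro L
  induction L with
  | nil => rfl
  | cons a L ih =>
    rw [List.filter_cons]
    cases hpa : p a
    · rw [if_neg (by simp [hpa]), List.map_cons, List.sum_cons, hp a hpa, zero_add, ih]
    · rw [if_pos (by simp [hpa]), List.map_cons, List.sum_cons, List.map_cons, List.sum_cons, ih]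

/-- Lemma B: a nonzero sum of scalar multiples of elements of `Sset ω I w` has the same
`t`-leading exponent as the `t'`-leading exponent of some nonzero element of `I`. -/
lemma keyB (t t' : TermOrder n) (ω : Fin n → ℝ) (ht' : t'.lt = refineLt ω t)
    (I : Ideal (MvPolynomial (Fin n) k)) (w : ℝ) :
    ∀ α : Fin n →₀ ℕ, ∀ L : List (k × MvPolynomial (Fin n) k),
      ∀ h : MvPolynomial (Fin n) k,
      (∀ x ∈ L, x.2 ∈ Sset ω I w) →
      (∀ x ∈ L, t.leadExp x.2 = α ∨ t.lt (t.leadExp x.2) α) →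
      h = (L.map fun x => x.1 • x.2).sum → h ≠ 0 →
      ∃ g ∈ I, g ≠ 0 ∧ t.leadExp h = t'.leadExp g := by
  classical
  intro α
  refine t.wf.induction
    (C := fun α => ∀ L : List (k × MvPolynomial (Fin n) k),
      ∀ h : MvPolynomial (Fin n) k,
      (∀ x ∈ L, x.2 ∈ Sset ω I w) →
      (∀ x ∈ L, t.leadExp x.2 = α ∨ t.lt (t.leadExp x.2) α) →
      h = (L.map fun x => x.1 • x.2).sum → h ≠ 0 →
      ∃ g ∈ I, g ≠ 0 ∧ t.leadExp h = t'.leadExp g) α ?_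
  clear α
  intro α ihα
  set pd : k × MvPolynomial (Fin n) k → Bool :=
    fun x => decide (x.1 ≠ 0 ∧ t.leadExp x.2 = α) with hpd
  suffices H : ∀ N : ℕ, ∀ L : List (k × MvPolynomial (Fin n) k),
      ∀ h : MvPolynomial (Fin n) k,
      L.countP pd ≤ N →
      (∀ x ∈ L, x.2 ∈ Sset ω I w) →
      (∀ x ∈ L, t.leadExp x.2 = α ∨ t.lt (t.leadExp x.2) α) →
      h = (L.map fun x => x.1 • x.2).sum → h ≠ 0 →
      ∃ g ∈ I, g ≠ 0 ∧ t.leadExp h = t'.leadExp g by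
    intro L h hS hb hsum hh0
    exact H L.length L h List.countP_le_length hS hb hsum hh0
  intro N
  induction N using Nat.strong_induction_on with
  | _ N ihN =>
  intro L h hcount hS hb hsum hh0
  have hcoeffsum : ∀ β, coeff β h = (L.map fun x => x.1 * coeff β x.2).sum := by
    intro β
    rw [hsum, lsum_coeff]
  -- any support element of any list entry is `α` or below
  have hsupbound : ∀ x ∈ L, ∀ β ∈ x.2.support, β = α ∨ t.lt β α := by
    intro x hx β hβ
    have hlead := t.isLeadExp_leadExp (Sset_ne_zero (hS x hx))
    rcases eq_or_ne β (t.leadExp x.2) with rfl | hne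
    · exact hb x hx
    · have h1 := hlead.2 β hβ hne
      rcases hb x hx with he | hl
      · exact Or.inr (he ▸ h1)
      · exact Or.inr (t.trans _ _ _ h1 hl)
  have hcoeff0 : ∀ x ∈ L, t.leadExp x.2 ≠ α → coeff α x.2 = 0 := by
    intro x hx hne
    by_contra hc
    have hlead := t.isLeadExp_leadExp (Sset_ne_zero (hS x hx))
    rcases eq_or_ne α (t.leadExp x.2) with he | hna
    · exact hne he.symm
    · have h1 := hlead.2 α (MvPolynomial.mem_support_iff.mpr hc) hna
      rcases hb x hx with he2 | hl2
      · exact hne he2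
      · exact t.irrefl α (t.trans _ _ _ h1 hl2)
  by_cases hcnt : ∃ x ∈ L, x.1 ≠ 0 ∧ t.leadExp x.2 = α
  · -- Case B : there is an "active" element at level α
    obtain ⟨x0, hx0L, hx00, hx0α⟩ := hcnt
    set p0 : MvPolynomial (Fin n) k := x0.2 with hp0def
    have hp0S : p0 ∈ Sset ω I w := hS x0 hx0L
    have hp00 : p0 ≠ 0 := Sset_ne_zero hp0S
    have hlc0 : coeff α p0 ≠ 0 := by
      have := (t.isLeadExp_leadExp hp00).1
      rw [hx0α] at this
      exact MvPolynomial.mem_support_iff.mp this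
    by_cases hcα : coeff α h = 0
    · -- Subcase B2 : cancellation at α; rewrite the representation
      obtain ⟨L₁, L₂, hL⟩ := List.append_of_mem hx0L
      subst hL
      set R : List (k × MvPolynomial (Fin n) k) := L₁ ++ L₂ with hRdef
      have hmemR : ∀ x ∈ R, x ∈ L₁ ++ x0 :: L₂ := by
        intro x hx
        rcases List.mem_append.mp hx with h1 | h2
        · exact List.mem_append.mpr (Or.inl h1)
        · exact List.mem_append.mpr (Or.inr (List.mem_cons_of_mem _ h2))
      -- there must be a second active element
      have hsecond : ∃ x1 ∈ R, x1.1 ≠ 0 ∧ t.leadExp x1.2 = α := by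
        by_contra hno
        push_neg at hno
        have hz : ∀ x ∈ R, x.1 * coeff α x.2 = 0 := by
          intro x hx
          by_cases hx1 : x.1 = 0
          · rw [hx1, zero_mul]
          · rw [hcoeff0 x (hmemR x hx) (hno x hx hx1), mul_zero]
        have : coeff α h = x0.1 * coeff α p0 := by
          rw [hcoeffsum α, List.map_append, List.sum_append, List.map_cons, List.sum_cons]
          rw [List.sum_eq_zero fun y hy => by
            obtain ⟨x, hx, rfl⟩ := List.mem_map.mp hy
            exact hz x (List.mem_append.mpr (Or.inl hx))]
          rw [List.sum_eq_zero fun y hy => by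
            obtain ⟨x, hx, rfl⟩ := List.mem_map.mp hy
            exact hz x (List.mem_append.mpr (Or.inr hx))]
          ring
        rw [this] at hcα
        exact hx00 (by
          rcases mul_eq_zero.mp hcα with h1 | h2
          · exact h1
          · exact absurd h2 hlc0)
      -- the sum over the rewritten list
      have key : ∀ M : List (k × MvPolynomial (Fin n) k),
          ((M.map fun x => if x.2 - (coeff α x.2 / coeff α p0) • p0 = 0 then ((0 : k), x.2)
              else (x.1, x.2 - (coeff α x.2 / coeff α p0) • p0)).map fun y => y.1 • y.2).sum
            = (M.map fun x => x.1 • x.2).sum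
              - ((M.map fun x => x.1 * (coeff α x.2 / coeff α p0)).sum) • p0 := by
        intro M
        induction M with
        | nil => simp
        | cons a M ih =>
          simp only [List.map_cons, List.sum_cons, ih, add_smul]
          have hpt : (if a.2 - (coeff α a.2 / coeff α p0) • p0 = 0 then ((0 : k), a.2)
              else (a.1, a.2 - (coeff α a.2 / coeff α p0) • p0)).1 •
                (if a.2 - (coeff α a.2 / coeff α p0) • p0 = 0 then ((0 : k), a.2)
                  else (a.1, a.2 - (coeff α a.2 / coeff α p0) • p0)).2
              = a.1 • a.2 - (a.1 * (coeff α a.2 / coeff α p0)) • p0 := by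
            by_cases hz : a.2 - (coeff α a.2 / coeff α p0) • p0 = 0
            · rw [if_pos hz, mul_smul, ← smul_sub, hz, smul_zero]
              exact zero_smul _ _
            · rw [if_neg hz, smul_sub, mul_smul]
          rw [hpt]
          abel
      set f : k × MvPolynomial (Fin n) k → k × MvPolynomial (Fin n) k :=
        fun x => if x.2 - (coeff α x.2 / coeff α p0) • p0 = 0 then ((0 : k), x.2)
          else (x.1, x.2 - (coeff α x.2 / coeff α p0) • p0) with hfdef
      set γ : k := x0.1 + (R.map fun x => x.1 * (coeff α x.2 / coeff α p0)).sum with hγdef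
      set L' : List (k × MvPolynomial (Fin n) k) := (R.map f) ++ [(γ, p0)] with hL'def
      have hsum' : h = (L'.map fun x => x.1 • x.2).sum := by
        rw [hL'def, List.map_append, List.sum_append, key R, hsum]
        simp only [List.map_append, List.sum_append, List.map_cons, List.sum_cons,
          List.map_nil, List.sum_nil, hγdef, add_smul, hRdef]
        abel
      -- properties of the entries of `L'`
      have hfq : ∀ x ∈ R, x.2 - (coeff α x.2 / coeff α p0) • p0 ≠ 0 →
          (x.2 - (coeff α x.2 / coeff α p0) • p0 ∈ Sset ω I w ∧
            t.lt (t.leadExp (x.2 - (coeff α x.2 / coeff α p0) • p0)) α) := by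
        intro x hx hq0
        set q := x.2 - (coeff α x.2 / coeff α p0) • p0 with hqdef
        have hqS : q ∈ Sset ω I w := Sset_sub_smul (hS x (hmemR x hx)) hp0S _ hq0
        have hqα : coeff α q = 0 := by
          rw [hqdef, MvPolynomial.coeff_sub, MvPolynomial.coeff_smul, smul_eq_mul,
            div_mul_cancel₀ _ hlc0, sub_self]
        have hql : t.leadExp q ∈ q.support := (t.isLeadExp_leadExp hq0).1
        have hqne : t.leadExp q ≠ α := by
          intro he
          rw [he, MvPolynomial.mem_support_iff] at hql
          exact hql hqα
        have hsupq : t.leadExp q ∈ x.2.support ∨ t.leadExp q ∈ p0.support := by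
          rw [MvPolynomial.mem_support_iff] at hql
          rw [hqdef, MvPolynomial.coeff_sub, MvPolynomial.coeff_smul, smul_eq_mul] at hql
          by_cases h1 : coeff (t.leadExp q) x.2 = 0
          · refine Or.inr (MvPolynomial.mem_support_iff.mpr fun h2 => hql ?_)
            rw [h1, h2, mul_zero, sub_zero]
          · exact Or.inl (MvPolynomial.mem_support_iff.mpr h1)
        refine ⟨hqS, ?_⟩
        rcases hsupq with h1 | h1
        · rcases hsupbound x (hmemR x hx) _ h1 with he | hl
          · exact absurd he hqne
          · exact hl
        · rcases hsupbound x0 hx0L _ h1 with he | hl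
          · exact absurd he hqne
          · exact hl
      have hS' : ∀ x ∈ L', x.2 ∈ Sset ω I w := by
        intro y hy
        rcases List.mem_append.mp hy with h1 | h2
        · obtain ⟨x, hx, rfl⟩ := List.mem_map.mp h1
          rw [hfdef]
          by_cases hz : x.2 - (coeff α x.2 / coeff α p0) • p0 = 0
          · simp only [if_pos hz]
            exact hS x (hmemR x hx)
          · simp only [if_neg hz]
            exact (hfq x hx hz).1
        · rw [List.mem_singleton.mp h2]
          exact hp0S
      have hb' : ∀ x ∈ L', t.leadExp x.2 = α ∨ t.lt (t.leadExp x.2) α := by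
        intro y hy
        rcases List.mem_append.mp hy with h1 | h2
        · obtain ⟨x, hx, rfl⟩ := List.mem_map.mp h1
          rw [hfdef]
          by_cases hz : x.2 - (coeff α x.2 / coeff α p0) • p0 = 0
          · simp only [if_pos hz]
            exact hb x (hmemR x hx)
          · simp only [if_neg hz]
            exact Or.inr (hfq x hx hz).2
        · rw [List.mem_singleton.mp h2]
          exact Or.inl hx0α
      -- counting
      have hcnt2 : 2 ≤ L₁.countP pd + 1 + L₂.countP pd := by
        obtain ⟨x1, hx1R, hx1⟩ := hsecond
        have : 0 < R.countP pd :=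
          List.countP_pos_iff.mpr ⟨x1, hx1R, by rw [hpd]; simpa using hx1⟩
        rw [hRdef, List.countP_append] at this
        omega
      have hcountL : L₁.countP pd + 1 + L₂.countP pd ≤
          (L₁ ++ x0 :: L₂).countP pd := by
        have hx0p : pd x0 = true := by rw [hpd]; simp [hx00, hx0α]; exact hx0α
        rw [List.countP_append, List.countP_cons, hx0p]
        simp
        omega
      have hN2 : 2 ≤ N := le_trans hcnt2 (le_trans hcountL hcount)
      have hcount' : L'.countP pd ≤ 1 := by
        rw [hL'def, List.countP_append]
        have h1 : (R.map f).countP pd = 0 := by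
          rw [List.countP_eq_zero]
          intro y hy
          obtain ⟨x, hx, rfl⟩ := List.mem_map.mp hy
          rw [hpd, hfdef]
          by_cases hz : x.2 - (coeff α x.2 / coeff α p0) • p0 = 0
          · simp [if_pos hz]
          · simp only [if_neg hz, decide_eq_true_eq, not_and]
            intro _
            exact fun he => t.irrefl _ (he ▸ (hfq x hx hz).2)
        have h2 : ([(γ, p0)]).countP pd ≤ 1 :=
          le_trans List.countP_le_length (by simp)
        omega
      exact ihN 1 (by omega) L' h hcount' hS' hb' hsum' hh0
    · -- Subcase B1 : no cancellation, `α` is the leading exponent of `h`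
      have hlead : t.IsLeadExp h α := by
        refine ⟨MvPolynomial.mem_support_iff.mpr hcα, ?_⟩
        intro β hβ hne
        have hex : ∃ x ∈ L, coeff β x.2 ≠ 0 := by
          by_contra hno
          push_neg at hno
          have : coeff β h = 0 := by
            rw [hcoeffsum β]
            refine List.sum_eq_zero fun y hy => ?_
            obtain ⟨x, hx, rfl⟩ := List.mem_map.mp hy
            rw [hno x hx, mul_zero]
          exact MvPolynomial.mem_support_iff.mp hβ this
        obtain ⟨x, hx, hc⟩ := hex
        rcases hsupbound x hx β (MvPolynomial.mem_support_iff.mpr hc) with he | hl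
        · exact absurd he hne
        · exact hl
      obtain ⟨g, hgI, hg0, hp, _⟩ := hp0S
      refine ⟨g, hgI, hg0, ?_⟩
      rw [t.leadExp_eq_of hlead, ← leadExp_initialForm t t' ω ht' hg0, ← hp, hx0α]
  · -- Case A : no active element at level α; pass to the true maximum
    push_neg at hcnt
    set pq : k × MvPolynomial (Fin n) k → Bool := fun x => decide (x.1 ≠ 0) with hpq
    have hpq0 : ∀ x : k × MvPolynomial (Fin n) k, pq x = false →
        x.1 • x.2 = (0 : MvPolynomial (Fin n) k) := by
      intro x hx
      rw [hpq] at hx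
      have : x.1 = 0 := by simpa using hx
      rw [this, zero_smul]
    set L' : List (k × MvPolynomial (Fin n) k) := L.filter pq with hL'def
    have hsum' : h = (L'.map fun x => x.1 • x.2).sum := by
      rw [hsum, hL'def, lsum_filter pq hpq0]
    have hmem' : ∀ x ∈ L', x ∈ L ∧ x.1 ≠ 0 := by
      intro x hx
      have h2 := List.mem_filter.mp hx
      refine ⟨h2.1, ?_⟩
      have h3 := h2.2
      rw [hpq] at h3
      simpa using h3
    have hne' : L' ≠ [] := by
      intro he
      apply hh0
      rw [hsum', he]
      simp
    have hsne : ((L'.map fun x => t.leadExp x.2).toFinset).Nonempty := by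
      obtain ⟨x, hx⟩ := List.exists_mem_of_ne_nil L' hne'
      exact ⟨t.leadExp x.2, by rw [List.mem_toFinset]; exact List.mem_map.mpr ⟨x, hx, rfl⟩⟩
    obtain ⟨β, hβs, hβmax⟩ := t.exists_max _ hsne
    rw [List.mem_toFinset] at hβs
    obtain ⟨xβ, hxβ, hβeq⟩ := List.mem_map.mp hβs
    have hβα : t.lt β α := by
      rcases hb xβ (hmem' xβ hxβ).1 with he | hl
      · exact absurd (hβeq ▸ he) (hcnt xβ (hmem' xβ hxβ).1 (hmem' xβ hxβ).2)
      · exact hβeq ▸ hl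
    have hb' : ∀ x ∈ L', t.leadExp x.2 = β ∨ t.lt (t.leadExp x.2) β := by
      intro x hx
      have hmem : t.leadExp x.2 ∈ (L'.map fun x => t.leadExp x.2).toFinset := by
        rw [List.mem_toFinset]
        exact List.mem_map.mpr ⟨x, hx, rfl⟩
      rcases eq_or_ne (t.leadExp x.2) β with he | hne
      · exact Or.inl he
      · exact Or.inr (hβmax _ hmem hne)
    exact ihα β hβα L' h (fun x hx => hS x (hmem' x hx).1) hb' hsum' hh0

end Aux6
section Aux7

variable {n : ℕ} {k : Type*} [Field k]

/-- Key lemma: the `t`-leading exponent of any nonzero element of `in_ω(I)` is the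
`t'`-leading exponent of some nonzero element of `I`. -/
lemma keyMain (t t' : TermOrder n) (ω : Fin n → ℝ) (ht' : t'.lt = refineLt ω t)
    (I : Ideal (MvPolynomial (Fin n) k)) {h : MvPolynomial (Fin n) k}
    (hhI : h ∈ initialIdealW ω I) (hh0 : h ≠ 0) :
    ∃ g ∈ I, g ≠ 0 ∧ t.leadExp h = t'.leadExp g := by
  classical
  set α := t.leadExp h with hα
  set w := wt ω α with hw
  have hlead := t.isLeadExp_leadExp hh0
  have hcα : coeff α h ≠ 0 := MvPolynomial.mem_support_iff.mp hlead.1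
  have hpw_coeff : coeff α (piW ω w h) = coeff α h := by rw [coeff_piW, if_pos hw.symm]
  have hpw0 : piW ω w h ≠ 0 := fun h0 => hcα (by rw [← hpw_coeff, h0, MvPolynomial.coeff_zero])
  have hsupp : ∀ β ∈ (piW ω w h).support, β ∈ h.support := by
    intro β hβ
    rw [MvPolynomial.mem_support_iff, coeff_piW] at hβ
    by_cases hc : wt ω β = w
    · rw [if_pos hc] at hβ
      exact MvPolynomial.mem_support_iff.mpr hβ
    · rw [if_neg hc] at hβ
      exact absurd rfl hβ
  have hplead : t.leadExp (piW ω w h) = α :=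
    t.leadExp_eq_of ⟨MvPolynomial.mem_support_iff.mpr (by rw [hpw_coeff]; exact hcα),
      fun β hβ hne => hlead.2 β (hsupp β hβ) hne⟩
  have hspan := piW_mem_span ω I hhI w
  rw [Submodule.mem_span_set] at hspan
  obtain ⟨c, hcsupp, hcsum⟩ := hspan
  set L : List (k × MvPolynomial (Fin n) k) := c.support.toList.map fun p => (c p, p) with hL
  have hsum : piW ω w h = (L.map fun x => x.1 • x.2).sum := by
    rw [hL, List.map_map, ← hcsum, Finsupp.sum]
    exact (Finset.sum_map_toList c.support fun p => c p • p).symm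
  have hSL : ∀ x ∈ L, x.2 ∈ Sset ω I w := by
    intro x hx
    rw [hL] at hx
    obtain ⟨p, hp, rfl⟩ := List.mem_map.mp hx
    exact hcsupp (by simpa using Finset.mem_toList.mp hp)
  have hLne : L ≠ [] := by
    intro he
    apply hpw0
    rw [hsum, he]
    rfl
  have hsne : ((L.map fun x => t.leadExp x.2).toFinset).Nonempty := by
    obtain ⟨x, hx⟩ := List.exists_mem_of_ne_nil L hLne
    exact ⟨t.leadExp x.2, by rw [List.mem_toFinset]; exact List.mem_map.mpr ⟨x, hx, rfl⟩⟩
  obtain ⟨β, hβs, hβmax⟩ := t.exists_max _ hsne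
  have hb : ∀ x ∈ L, t.leadExp x.2 = β ∨ t.lt (t.leadExp x.2) β := by
    intro x hx
    have hmem : t.leadExp x.2 ∈ (L.map fun x => t.leadExp x.2).toFinset := by
      rw [List.mem_toFinset]
      exact List.mem_map.mpr ⟨x, hx, rfl⟩
    rcases eq_or_ne (t.leadExp x.2) β with he | hne
    · exact Or.inl he
    · exact Or.inr (hβmax _ hmem hne)
  obtain ⟨g, hgI, hg0, heq⟩ := keyB t t' ω ht' I w β L (piW ω w h) hSL hb hsum hpw0
  exact ⟨g, hgI, hg0, by rw [← hplead]; exact heq⟩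

end Aux7


/-- For the refinement `<_ω` of `ω` by `t`, `in_{<_ω}(f) = in_t(in_ω(f))` for
every nonzero `f`, and consequently `in_{<_ω}(I) = in_t(in_ω(I))` for every ideal `I`. -/
theorem leadTerm_refinement_eq {k : Type*} [Field k] (t t' : TermOrder n)
    (ω : Fin n → ℝ) (hω : ∀ i, 0 ≤ ω i) (ht' : t'.lt = refineLt ω t) :
    (∀ f : MvPolynomial (Fin n) k, f ≠ 0 →
        t'.leadTerm f = t.leadTerm (initialForm ω f)) ∧
    ∀ I : Ideal (MvPolynomial (Fin n) k),
        initialIdealT t' I = initialIdealT t (initialIdealW ω I) := by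
  classical
  constructor
  · intro f hf
    exact leadTerm_initialForm t t' ω ht' hf
  · intro I
    apply le_antisymm
    · show Ideal.span _ ≤ _
      refine Ideal.span_le.mpr ?_
      rintro p ⟨f, hfI, hf0, rfl⟩
      rw [leadTerm_initialForm t t' ω ht' hf0]
      exact Ideal.subset_span ⟨initialForm ω f, Ideal.subset_span ⟨f, hfI, hf0, rfl⟩,
        initialForm_ne_zero hf0, rfl⟩
    · show Ideal.span _ ≤ _
      refine Ideal.span_le.mpr ?_
      rintro p ⟨h, hhI, hh0, rfl⟩
      obtain ⟨g, hgI, hg0, heq⟩ := keyMain t t' ω ht' I hhI hh0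
      have hgc : coeff (t'.leadExp g) g ≠ 0 :=
        MvPolynomial.mem_support_iff.mp (t'.mem_support_leadExp hg0)
      have hkey : t.leadTerm h =
          MvPolynomial.C (coeff (t.leadExp h) h / coeff (t'.leadExp g) g) * t'.leadTerm g := by
        rw [TermOrder.leadTerm, TermOrder.leadTerm, MvPolynomial.C_mul_monomial,
          div_mul_cancel₀ _ hgc, heq]
      rw [hkey]
      exact Ideal.mul_mem_left _ _ (Ideal.subset_span ⟨g, hgI, hg0, rfl⟩)
end

section
/- Lifting lemma for the Gröbner walk: Let H be a Gröbner basis of I with respect to a term ordering <, and let ω ∈ ℚ^n_{≥0} lie in the closed Gröbner cone of < for I. If M = {m_1,...,m_r} is a Gröbner basis of in_ω(I) with respect to the refinement ordering <'_ω of ω by another term ordering <', then G = {m_1 − nf_H(m_1), ..., m_r − nf_H(m_r)} is a Gröbner basis of I with respect to <'_ω, where nf_H denotes the normal form with respect to H and <. -/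
open MvPolynomial

variable {n : ℕ}

namespace Lifting
open Classical

variable {k : Type*} [Field k]

lemma wt_add (ω : Fin n → ℝ) (α β : Fin n →₀ ℕ) : wt ω (α + β) = wt ω α + wt ω β := by
  simp only [wt, Finsupp.add_apply, Nat.cast_add, mul_add]
  rw [Finset.sum_add_distrib]

lemma wt_sub (ω : Fin n → ℝ) {α β : Fin n →₀ ℕ} (h : β ≤ α) :
    wt ω (α - β) = wt ω α - wt ω β := by
  have : (α - β) + β = α := tsub_add_cancel_of_le h
  have := wt_add ω (α - β) β
  rw [tsub_add_cancel_of_le h] at this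
  linarith

lemma continuous_wt (α : Fin n →₀ ℕ) : Continuous fun v : Fin n → ℝ => wt v α := by
  unfold wt
  exact continuous_finset_sum _ fun i _ => (continuous_apply i).mul continuous_const

lemma exists_t_max (t : TermOrder n) (s : Finset (Fin n →₀ ℕ)) (hs : s.Nonempty) :
    ∃ α ∈ s, ∀ β ∈ s, β ≠ α → t.lt β α := by
  classical
  induction s using Finset.induction with
  | empty => simp at hs
  | @insert a s' ha ih =>
    by_cases h' : s'.Nonempty
    · obtain ⟨α, hαs, hα⟩ := ih h'
      rcases t.trichotomous a α with h | h | h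
      · exact ⟨α, Finset.mem_insert_of_mem hαs, fun β hβ hne => by
          rcases Finset.mem_insert.1 hβ with rfl | hβ
          · exact h
          · exact hα β hβ hne⟩
      · exact absurd (h ▸ hαs) ha
      · refine ⟨a, Finset.mem_insert_self _ _, fun β hβ hne => ?_⟩
        rcases Finset.mem_insert.1 hβ with rfl | hβ
        · exact absurd rfl hne
        · by_cases hβα : β = α
          · exact hβα ▸ h
          · exact t.trans _ _ _ (hα β hβ hβα) h
    · rw [Finset.not_nonempty_iff_eq_empty] at h'
      subst h'
      exact ⟨a, Finset.mem_insert_self _ _, fun β hβ hne => by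
        simp only [Finset.mem_insert, Finset.notMem_empty, or_false] at hβ
        exact absurd hβ hne⟩

lemma isLeadExp_unique {t : TermOrder n} {f : MvPolynomial (Fin n) k} {α β : Fin n →₀ ℕ}
    (hα : t.IsLeadExp f α) (hβ : t.IsLeadExp f β) : α = β := by
  by_contra hne
  exact t.irrefl α (t.trans _ _ _ (hβ.2 α hα.1 (fun h => hne h)) (hα.2 β hβ.1 fun h => hne h.symm))

lemma leadExp_eq {t : TermOrder n} {f : MvPolynomial (Fin n) k} {α : Fin n →₀ ℕ}
    (h : t.IsLeadExp f α) : t.leadExp f = α := by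
  rw [TermOrder.leadExp, dif_pos ⟨α, h⟩]
  exact isLeadExp_unique (Exists.choose_spec (⟨α, h⟩ : ∃ α, t.IsLeadExp f α)) h

lemma isLeadExp_leadExp (t : TermOrder n) {f : MvPolynomial (Fin n) k} (hf : f ≠ 0) :
    t.IsLeadExp f (t.leadExp f) := by
  obtain ⟨α, hαs, hα⟩ := exists_t_max t f.support (support_nonempty.2 hf)
  rw [leadExp_eq ⟨hαs, hα⟩]; exact ⟨hαs, hα⟩

lemma leadTerm_zero (t : TermOrder n) : t.leadTerm (0 : MvPolynomial (Fin n) k) = 0 := by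
  simp [TermOrder.leadTerm]

noncomputable def compW (ω : Fin n → ℝ) (w : ℝ) (f : MvPolynomial (Fin n) k) :
    MvPolynomial (Fin n) k :=
  ∑ α ∈ f.support.filter (fun α => wt ω α = w), monomial α (coeff α f)

lemma coeff_compW (ω : Fin n → ℝ) (w : ℝ) (f : MvPolynomial (Fin n) k) (β : Fin n →₀ ℕ) :
    coeff β (compW ω w f) = if wt ω β = w then coeff β f else 0 := by
  rw [compW, coeff_sum]
  simp only [coeff_monomial]
  rw [Finset.sum_ite_eq' (f.support.filter (fun α => wt ω α = w)) β (fun α => coeff α f)]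
  simp only [Finset.mem_filter]
  by_cases h1 : wt ω β = w
  · by_cases h2 : β ∈ f.support
    · simp [h1, h2]
    · simp only [mem_support_iff, not_not] at h2
      simp [h1, h2]
  · simp [h1]

lemma coeff_initialForm (ω : Fin n → ℝ) (f : MvPolynomial (Fin n) k) (β : Fin n →₀ ℕ) :
    coeff β (initialForm ω f) =
      if (∀ γ ∈ f.support, wt ω γ ≤ wt ω β) then coeff β f else 0 := by
  rw [initialForm, coeff_sum]
  simp only [coeff_monomial]
  rw [Finset.sum_ite_eq' _ β (fun α => coeff α f)]
  simp only [Finset.mem_filter]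
  by_cases h1 : ∀ γ ∈ f.support, wt ω γ ≤ wt ω β
  · by_cases h2 : β ∈ f.support
    · rw [if_pos (⟨h2, h1⟩ : _ ∧ _), if_pos h1]
    · simp only [mem_support_iff, not_not] at h2
      rw [h2]
      simp
  · rw [if_neg h1, if_neg]
    intro h; exact h1 h.2

lemma mem_supp_compW {ω : Fin n → ℝ} {w : ℝ} {f : MvPolynomial (Fin n) k} {β : Fin n →₀ ℕ} :
    β ∈ (compW ω w f).support ↔ wt ω β = w ∧ β ∈ f.support := by
  rw [mem_support_iff, coeff_compW, mem_support_iff]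
  by_cases h : wt ω β = w <;> simp [h]

lemma mem_supp_initialForm {ω : Fin n → ℝ} {f : MvPolynomial (Fin n) k} {β : Fin n →₀ ℕ} :
    β ∈ (initialForm ω f).support ↔
      β ∈ f.support ∧ ∀ γ ∈ f.support, wt ω γ ≤ wt ω β := by
  rw [mem_support_iff, coeff_initialForm]
  by_cases h : ∀ γ ∈ f.support, wt ω γ ≤ wt ω β <;> simp [h, mem_support_iff, and_comm]

lemma compW_add (ω : Fin n → ℝ) (w : ℝ) (f g : MvPolynomial (Fin n) k) :
    compW ω w (f + g) = compW ω w f + compW ω w g := by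
  apply MvPolynomial.ext; intro β
  simp only [coeff_add, coeff_compW]
  by_cases h : wt ω β = w <;> simp [h]

lemma compW_zero (ω : Fin n → ℝ) (w : ℝ) : compW ω w (0 : MvPolynomial (Fin n) k) = 0 := by
  apply MvPolynomial.ext; intro β
  simp [coeff_compW]

lemma compW_sub (ω : Fin n → ℝ) (w : ℝ) (f g : MvPolynomial (Fin n) k) :
    compW ω w (f - g) = compW ω w f - compW ω w g := by
  apply MvPolynomial.ext; intro β
  simp only [coeff_sub, coeff_compW]
  by_cases h : wt ω β = w <;> simp [h]

lemma exists_top (ω : Fin n → ℝ) {f : MvPolynomial (Fin n) k} (hf : f ≠ 0) :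
    ∃ α ∈ f.support, ∀ β ∈ f.support, wt ω β ≤ wt ω α :=
  Finset.exists_max_image f.support (wt ω) (support_nonempty.2 hf)

lemma initialForm_ne_zero (ω : Fin n → ℝ) {f : MvPolynomial (Fin n) k} (hf : f ≠ 0) :
    initialForm ω f ≠ 0 := by
  obtain ⟨α, hα, hmax⟩ := exists_top ω hf
  intro h
  have : α ∈ (initialForm ω f).support := mem_supp_initialForm.2 ⟨hα, hmax⟩
  rw [h] at this; simp at this

lemma initialForm_weight_eq {ω : Fin n → ℝ} {f : MvPolynomial (Fin n) k} {α β : Fin n →₀ ℕ}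
    (hα : α ∈ (initialForm ω f).support) (hβ : β ∈ (initialForm ω f).support) :
    wt ω α = wt ω β := by
  rw [mem_supp_initialForm] at hα hβ
  exact le_antisymm (hβ.2 α hα.1) (hα.2 β hβ.1)

/-- TOP lemma: if all weights of `f` are `≤ w` and the weight-`w` part is nonzero,
the initial form is the weight-`w` part. -/
lemma initialForm_eq_compW {ω : Fin n → ℝ} {w : ℝ} {f : MvPolynomial (Fin n) k}
    (hle : ∀ α ∈ f.support, wt ω α ≤ w) (hne : compW ω w f ≠ 0) :
    initialForm ω f = compW ω w f := by
  obtain ⟨α0, hα0⟩ := support_nonempty.2 hne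
  obtain ⟨hw0, hα0f⟩ := mem_supp_compW.1 hα0
  apply MvPolynomial.ext; intro β
  rw [coeff_initialForm, coeff_compW]
  by_cases hβ : β ∈ f.support
  · have hcond : (∀ γ ∈ f.support, wt ω γ ≤ wt ω β) ↔ wt ω β = w := by
      constructor
      · intro h
        exact le_antisymm (hle β hβ) (hw0 ▸ h α0 hα0f)
      · intro hw γ hγ
        rw [hw]; exact hle γ hγ
    simp only [hcond]
  · simp only [mem_support_iff, not_not] at hβ
    rw [hβ]
    split <;> split <;> rfl

lemma compW_monomial_mul (ω : Fin n → ℝ) (w : ℝ) (γ : Fin n →₀ ℕ) (c : k)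
    (f : MvPolynomial (Fin n) k) :
    compW ω w (monomial γ c * f) = monomial γ c * compW ω (w - wt ω γ) f := by
  apply MvPolynomial.ext; intro β
  rw [coeff_compW, coeff_monomial_mul', coeff_monomial_mul', coeff_compW]
  by_cases hγ : γ ≤ β
  · rw [if_pos hγ, if_pos hγ]
    have hwt : wt ω (β - γ) = wt ω β - wt ω γ := wt_sub ω hγ
    by_cases hw : wt ω β = w
    · rw [if_pos hw, if_pos (by rw [hwt, hw])]
    · rw [if_neg hw, if_neg (by rw [hwt]; intro h; exact hw (by linarith)), mul_zero]
  · rw [if_neg hγ, if_neg hγ]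
    split <;> rfl

lemma initialForm_monomial_mul (ω : Fin n → ℝ) (γ : Fin n →₀ ℕ) {c : k} (hc : c ≠ 0)
    (f : MvPolynomial (Fin n) k) :
    initialForm ω (monomial γ c * f) = monomial γ c * initialForm ω f := by
  have hsupp : ∀ δ : Fin n →₀ ℕ, δ ∈ (monomial γ c * f).support ↔
      γ ≤ δ ∧ (δ - γ) ∈ f.support := by
    intro δ
    rw [mem_support_iff, coeff_monomial_mul', mem_support_iff]
    by_cases hγ : γ ≤ δ
    · simp [hγ, hc]
    · simp [hγ]
  apply MvPolynomial.ext; intro β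
  rw [coeff_initialForm, coeff_monomial_mul', coeff_monomial_mul', coeff_initialForm]
  by_cases hγ : γ ≤ β
  · rw [if_pos hγ, if_pos hγ]
    have hwt : wt ω (β - γ) = wt ω β - wt ω γ := wt_sub ω hγ
    have hcond : (∀ δ ∈ (monomial γ c * f).support, wt ω δ ≤ wt ω β) ↔
        (∀ ε ∈ f.support, wt ω ε ≤ wt ω (β - γ)) := by
      constructor
      · intro h ε hε
        have : γ + ε ∈ (monomial γ c * f).support := by
          rw [hsupp]
          exact ⟨le_self_add, by rwa [add_tsub_cancel_left]⟩
        have h2 := h _ this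
        rw [wt_add] at h2
        rw [hwt]; linarith
      · intro h δ hδ
        rw [hsupp] at hδ
        have h2 := h _ hδ.2
        have h3 : wt ω δ = wt ω (δ - γ) + wt ω γ := by
          rw [wt_sub ω hδ.1]; ring
        rw [hwt] at h2
        rw [h3]; linarith
    rw [if_congr hcond rfl rfl]
    split <;> simp
  · rw [if_neg hγ, if_neg hγ]
    split <;> rfl

/-- `q` admits, for each weight `w`, an `F ∈ I` with all weights `≤ w` whose
weight-`w` component matches that of `q`. -/
def GoodRep (I : Ideal (MvPolynomial (Fin n) k)) (ωr : Fin n → ℝ)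
    (q : MvPolynomial (Fin n) k) : Prop :=
  ∀ w, ∃ F ∈ I, (∀ α ∈ F.support, wt ωr α ≤ w) ∧ compW ωr w F = compW ωr w q

lemma goodRep_zero (I : Ideal (MvPolynomial (Fin n) k)) (ωr : Fin n → ℝ) :
    GoodRep I ωr 0 := by
  intro w
  exact ⟨0, I.zero_mem, by simp, rfl⟩

lemma goodRep_add {I : Ideal (MvPolynomial (Fin n) k)} {ωr : Fin n → ℝ}
    {q q' : MvPolynomial (Fin n) k} (h : GoodRep I ωr q) (h' : GoodRep I ωr q') :
    GoodRep I ωr (q + q') := by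
  intro w
  obtain ⟨F, hFI, hFw, hFc⟩ := h w
  obtain ⟨F', hFI', hFw', hFc'⟩ := h' w
  refine ⟨F + F', I.add_mem hFI hFI', ?_, ?_⟩
  · intro α hα
    rcases Finset.mem_union.1 (MvPolynomial.support_add hα) with h1 | h1
    · exact hFw α h1
    · exact hFw' α h1
  · rw [compW_add, compW_add, hFc, hFc']

lemma goodRep_monomial_mul {I : Ideal (MvPolynomial (Fin n) k)} {ωr : Fin n → ℝ}
    {q : MvPolynomial (Fin n) k} (h : GoodRep I ωr q) (γ : Fin n →₀ ℕ) (c : k) :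
    GoodRep I ωr (monomial γ c * q) := by
  intro w
  obtain ⟨F, hFI, hFw, hFc⟩ := h (w - wt ωr γ)
  refine ⟨monomial γ c * F, I.mul_mem_left _ hFI, ?_, ?_⟩
  · intro α hα
    rw [mem_support_iff, coeff_monomial_mul'] at hα
    by_cases hγ : γ ≤ α
    · rw [if_pos hγ] at hα
      have h1 : α - γ ∈ F.support := by
        rw [mem_support_iff]
        intro h0
        rw [h0, mul_zero] at hα
        exact hα rfl
      have h2 := hFw _ h1
      have h3 : wt ωr (α - γ) = wt ωr α - wt ωr γ := wt_sub ωr hγ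
      linarith
    · rw [if_neg hγ] at hα
      exact absurd rfl hα
  · rw [compW_monomial_mul, compW_monomial_mul, hFc]

lemma goodRep_gen {I : Ideal (MvPolynomial (Fin n) k)} {ωr : Fin n → ℝ}
    {f : MvPolynomial (Fin n) k} (hf : f ∈ I) :
    GoodRep I ωr (initialForm ωr f) := by
  intro w
  by_cases h : compW ωr w (initialForm ωr f) = 0
  · exact ⟨0, I.zero_mem, by simp, by rw [h]; exact compW_zero ωr w⟩
  · obtain ⟨β, hβ⟩ := support_nonempty.2 h
    obtain ⟨hwβ, hβf⟩ := mem_supp_compW.1 hβ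
    obtain ⟨hβsupp, hβmax⟩ := mem_supp_initialForm.1 hβf
    refine ⟨f, hf, ?_, ?_⟩
    · intro α hα
      rw [← hwβ]
      exact hβmax α hα
    · apply MvPolynomial.ext; intro α
      rw [coeff_compW, coeff_compW]
      by_cases hw : wt ωr α = w
      · rw [if_pos hw, if_pos hw, coeff_initialForm, if_pos]
        intro γ hγ
        calc wt ωr γ ≤ wt ωr β := hβmax γ hγ
          _ = wt ωr α := by rw [hwβ, hw]
      · rw [if_neg hw, if_neg hw]

lemma goodRep_of_mem {I : Ideal (MvPolynomial (Fin n) k)} {ωr : Fin n → ℝ}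
    {p : MvPolynomial (Fin n) k} (hp : p ∈ initialIdealW ωr I) : GoodRep I ωr p := by
  refine Submodule.span_induction
    (p := fun q _ => GoodRep I ωr q) ?_ (goodRep_zero I ωr)
    (fun x y _ _ hx hy => goodRep_add hx hy) ?_ hp
  · rintro x ⟨f, hfI, -, rfl⟩
    exact goodRep_gen hfI
  · intro a x _ hx
    rw [smul_eq_mul]
    have : a * x = ∑ γ ∈ a.support, monomial γ (coeff γ a) * x := by
      conv_lhs => rw [a.as_sum, Finset.sum_mul]
    rw [this]
    apply Finset.sum_induction _ (GoodRep I ωr) (fun _ _ h h' => goodRep_add h h')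
      (goodRep_zero I ωr)
    intro γ _
    exact goodRep_monomial_mul hx γ _

/-- KEY: every nonzero `ω`-homogeneous component of an element of `in_ω(I)` is the
initial form of a nonzero element of `I`. -/
lemma component_is_initialForm {I : Ideal (MvPolynomial (Fin n) k)} {ωr : Fin n → ℝ}
    {p : MvPolynomial (Fin n) k} (hp : p ∈ initialIdealW ωr I) {w : ℝ}
    (hw : compW ωr w p ≠ 0) :
    ∃ F ∈ I, F ≠ 0 ∧ initialForm ωr F = compW ωr w p := by
  obtain ⟨F, hFI, hFw, hFc⟩ := goodRep_of_mem hp w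
  have hF0 : F ≠ 0 := by
    intro h
    rw [h, compW_zero] at hFc
    exact hw hFc.symm
  have : initialForm ωr F = compW ωr w F := initialForm_eq_compW hFw (hFc.symm ▸ hw)
  exact ⟨F, hFI, hF0, by rw [this, hFc]⟩

lemma initialForm_mem {I : Ideal (MvPolynomial (Fin n) k)} (ωr : Fin n → ℝ)
    {f : MvPolynomial (Fin n) k} (hf : f ∈ I) (h0 : f ≠ 0) :
    initialForm ωr f ∈ initialIdealW ωr I :=
  Ideal.subset_span ⟨f, hf, h0, rfl⟩

lemma cone_approx (I : Ideal (MvPolynomial (Fin n) k)) (t : TermOrder n) (ωr : Fin n → ℝ)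
    (hcone : ωr ∈ closure {v : Fin n → ℝ |
        (∀ i, 0 ≤ v i) ∧ initialIdealW v I = initialIdealT t I})
    (A : Finset (Fin n →₀ ℕ)) :
    ∃ v : Fin n → ℝ, initialIdealW v I = initialIdealT t I ∧
      ∀ α ∈ A, ∀ β ∈ A, wt ωr α < wt ωr β → wt v α < wt v β := by
  set U : Set (Fin n → ℝ) :=
    ⋂ α ∈ A, ⋂ β ∈ A, {v | wt ωr α < wt ωr β → wt v α < wt v β} with hU
  have hUopen : IsOpen U := by
    apply isOpen_biInter_finset
    intro α _
    apply isOpen_biInter_finset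
    intro β _
    by_cases h : wt ωr α < wt ωr β
    · have : {v : Fin n → ℝ | wt ωr α < wt ωr β → wt v α < wt v β}
          = {v | wt v α < wt v β} := by
        ext v; simp [h]
      rw [this]
      exact isOpen_lt (continuous_wt α) (continuous_wt β)
    · have : {v : Fin n → ℝ | wt ωr α < wt ωr β → wt v α < wt v β} = Set.univ := by
        ext v; simp [h]
      rw [this]
      exact isOpen_univ
  have hωU : ωr ∈ U := by
    rw [hU]
    simp only [Set.mem_iInter, Set.mem_setOf_eq]
    exact fun α _ β _ h => h
  obtain ⟨v, hvU, hvS⟩ := (mem_closure_iff.1 hcone) U hUopen hωU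
  refine ⟨v, hvS.2, ?_⟩
  intro α hα β hβ hlt
  simp only [hU, Set.mem_iInter, Set.mem_setOf_eq] at hvU
  exact hvU α hα β hβ hlt

lemma mem_monomial_span {t : TermOrder n} {H : Finset (MvPolynomial (Fin n) k)}
    {r : MvPolynomial (Fin n) k}
    (hr : r ∈ Ideal.span ((fun g => t.leadTerm g) '' (H : Set (MvPolynomial (Fin n) k))))
    {α : Fin n →₀ ℕ} (hα : α ∈ r.support) :
    ∃ h ∈ H, t.leadExp h ≤ α := by
  classical
  rw [show ((fun g => t.leadTerm g) '' (H : Set (MvPolynomial (Fin n) k)))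
      = ((H.image fun g => t.leadTerm g : Finset (MvPolynomial (Fin n) k)) :
          Set (MvPolynomial (Fin n) k)) by rw [Finset.coe_image]] at hr
  rw [Ideal.span, Submodule.mem_span_finset] at hr
  obtain ⟨c, -, hc⟩ := hr
  rw [← hc] at hα
  have := MvPolynomial.support_sum hα
  rw [Finset.mem_biUnion] at this
  obtain ⟨p, hp, hαp⟩ := this
  obtain ⟨h, hhH, rfl⟩ := Finset.mem_image.1 hp
  refine ⟨h, hhH, ?_⟩
  rw [smul_eq_mul] at hαp
  have h2 := MvPolynomial.support_mul _ _ hαp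
  rw [Finset.mem_add] at h2
  obtain ⟨a, ha, b, hb, rfl⟩ := h2
  have : b ∈ ((monomial (t.leadExp h)) (coeff (t.leadExp h) h)).support := hb
  rw [TermOrder.leadTerm] at hb
  have := MvPolynomial.support_monomial_subset hb
  rw [Finset.mem_singleton] at this
  subst this
  exact le_add_self

/-- Every nonzero element of `in_ω(I)` has a monomial divisible by the lead of some
element of the Gröbner basis `H` of `I` (for `ω` in the closed Gröbner cone). -/
lemma std_lemma {I : Ideal (MvPolynomial (Fin n) k)} {t : TermOrder n}
    {H : Finset (MvPolynomial (Fin n) k)} {ωr : Fin n → ℝ}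
    (hH : IsGroebnerBasis t I H)
    (hcone : ωr ∈ closure {v : Fin n → ℝ |
        (∀ i, 0 ≤ v i) ∧ initialIdealW v I = initialIdealT t I})
    {p : MvPolynomial (Fin n) k} (hp : p ∈ initialIdealW ωr I) (hp0 : p ≠ 0) :
    ∃ α ∈ p.support, ∃ h ∈ H, t.leadExp h ≤ α := by
  obtain ⟨α0, hα0⟩ := support_nonempty.2 hp0
  set w := wt ωr α0 with hw
  have hcne : compW ωr w p ≠ 0 := by
    intro h
    have : coeff α0 (compW ωr w p) = coeff α0 p := by
      rw [coeff_compW, if_pos rfl]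
    rw [h] at this
    simp only [coeff_zero] at this
    exact (mem_support_iff.1 hα0) this.symm
  obtain ⟨F, hFI, hF0, hFin⟩ := component_is_initialForm hp hcne
  obtain ⟨v, hvI, hvmono⟩ := cone_approx I t ωr hcone F.support
  have hvF0 : initialForm v F ≠ 0 := initialForm_ne_zero v hF0
  have hsub : (initialForm v F).support ⊆ p.support := by
    intro α hα
    obtain ⟨hαF, hαmax⟩ := mem_supp_initialForm.1 hα
    have hαω : α ∈ (initialForm ωr F).support := by
      rw [mem_supp_initialForm]
      refine ⟨hαF, ?_⟩
      intro γ hγ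
      by_contra hlt
      push_neg at hlt
      exact absurd (hαmax γ hγ) (not_le.2 (hvmono α hαF γ hγ hlt))
    rw [hFin] at hαω
    exact Finset.mem_of_subset (fun β hβ => (mem_supp_compW.1 hβ).2) hαω
  have hmem : initialForm v F ∈ Ideal.span
      ((fun g => t.leadTerm g) '' (H : Set (MvPolynomial (Fin n) k))) := by
    rw [hH.2]
    rw [← hvI]
    exact initialForm_mem v hFI hF0
  obtain ⟨α, hα⟩ := support_nonempty.2 hvF0
  obtain ⟨h, hhH, hle⟩ := mem_monomial_span hmem hα
  exact ⟨α, hsub hα, h, hhH, hle⟩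

lemma leadExp_max_weight {t'' t' : TermOrder n} {ωr : Fin n → ℝ}
    (ht'' : t''.lt = refineLt ωr t') {f : MvPolynomial (Fin n) k} (hf : f ≠ 0) :
    ∀ β ∈ f.support, wt ωr β ≤ wt ωr (t''.leadExp f) := by
  intro β hβ
  obtain ⟨hmem, hmax⟩ := isLeadExp_leadExp t'' hf
  by_cases h : β = t''.leadExp f
  · rw [h]
  · have := hmax β hβ h
    rw [ht''] at this
    rcases this with h1 | h1
    · exact le_of_lt h1
    · exact le_of_eq h1.1

lemma leadTerm_initialForm {t'' t' : TermOrder n} {ωr : Fin n → ℝ}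
    (ht'' : t''.lt = refineLt ωr t') {f : MvPolynomial (Fin n) k} (hf : f ≠ 0) :
    t''.leadTerm (initialForm ωr f) = t''.leadTerm f := by
  obtain ⟨hmem, hmax⟩ := isLeadExp_leadExp t'' hf
  have hlead_mem : t''.leadExp f ∈ (initialForm ωr f).support :=
    mem_supp_initialForm.2 ⟨hmem, leadExp_max_weight ht'' hf⟩
  have hIs : t''.IsLeadExp (initialForm ωr f) (t''.leadExp f) := by
    refine ⟨hlead_mem, ?_⟩
    intro β hβ hne
    exact hmax β (mem_supp_initialForm.1 hβ).1 hne
  rw [TermOrder.leadTerm, TermOrder.leadTerm, leadExp_eq hIs]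
  congr 1
  rw [coeff_initialForm, if_pos (leadExp_max_weight ht'' hf)]

/-- Lifting of lead terms: if `m ∈ in_ω(I)`, `m - N ∈ I` and no monomial of `N`
is divisible by a lead of `H`, then `m - N` and `m` have the same `t''`-lead term. -/
lemma leadTerm_lift {I : Ideal (MvPolynomial (Fin n) k)} {t t' t'' : TermOrder n}
    {H : Finset (MvPolynomial (Fin n) k)} {ωr : Fin n → ℝ}
    (hH : IsGroebnerBasis t I H)
    (hcone : ωr ∈ closure {v : Fin n → ℝ |
        (∀ i, 0 ≤ v i) ∧ initialIdealW v I = initialIdealT t I})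
    (ht'' : t''.lt = refineLt ωr t')
    {m N : MvPolynomial (Fin n) k} (hm : m ∈ initialIdealW ωr I)
    (hmN : m - N ∈ I)
    (hNstd : ∀ α ∈ N.support, ∀ h ∈ H, ¬ t.leadExp h ≤ α) :
    t''.leadTerm (m - N) = t''.leadTerm m := by
  have noJ : ∀ p : MvPolynomial (Fin n) k, p ∈ initialIdealW ωr I → p ≠ 0 →
      ¬ (p.support ⊆ N.support) := by
    intro p hp hp0 hsub
    obtain ⟨α, hαp, h, hhH, hle⟩ := std_lemma hH hcone hp hp0
    exact hNstd α (hsub hαp) h hhH hle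
  by_cases hm0 : m = 0
  · subst hm0
    have hN0 : N = 0 := by
      by_contra hN0
      have hNI : (0 : MvPolynomial (Fin n) k) - N ∈ I := hmN
      rw [zero_sub] at hNI
      have hin : initialForm ωr (-N) ∈ initialIdealW ωr I :=
        initialForm_mem ωr hNI (neg_ne_zero.2 hN0)
      refine noJ _ hin (initialForm_ne_zero ωr (neg_ne_zero.2 hN0)) ?_
      intro α hα
      have := (mem_supp_initialForm.1 hα).1
      rwa [MvPolynomial.support_neg] at this
    rw [hN0, sub_zero]
  -- main case
  set α' := t''.leadExp m with hα'
  set w : ℝ := wt ωr α' with hwdef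
  have hmax : ∀ β ∈ m.support, wt ωr β ≤ w := leadExp_max_weight ht'' hm0
  have hαmem : α' ∈ m.support := (isLeadExp_leadExp t'' hm0).1
  have hcm_ne : compW ωr w m ≠ 0 := by
    intro h
    have : coeff α' (compW ωr w m) = coeff α' m := by rw [coeff_compW, if_pos rfl]
    rw [h, coeff_zero] at this
    exact (mem_support_iff.1 hαmem) this.symm
  have hcmJ : compW ωr w m ∈ initialIdealW ωr I := by
    obtain ⟨F, hFI, hF0, hFeq⟩ := component_is_initialForm hm hcm_ne
    rw [← hFeq]
    exact initialForm_mem ωr hFI hF0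
  -- Claim: all monomials of N have weight < w
  have hNlt : ∀ α ∈ N.support, wt ωr α < w := by
    by_contra hcon
    push_neg at hcon
    obtain ⟨α1, hα1, hα1w⟩ := hcon
    have hN0 : N ≠ 0 := fun h => by simp [h] at hα1
    obtain ⟨α2, hα2, hα2max⟩ := exists_top ωr hN0
    set w' : ℝ := wt ωr α2 with hw'
    have hww' : w ≤ w' := le_trans hα1w (hα2max α1 hα1)
    have hcN_ne : compW ωr w' N ≠ 0 := by
      intro h
      have : coeff α2 (compW ωr w' N) = coeff α2 N := by rw [coeff_compW, if_pos rfl]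
      rw [h, coeff_zero] at this
      exact (mem_support_iff.1 hα2) this.symm
    have hsuppg : (m - N).support ⊆ m.support ∪ N.support := by
      intro β hβ
      rw [sub_eq_add_neg] at hβ
      rcases Finset.mem_union.1 (MvPolynomial.support_add hβ) with h1 | h1
      · exact Finset.mem_union_left _ h1
      · rw [MvPolynomial.support_neg] at h1
        exact Finset.mem_union_right _ h1
    rcases lt_or_ge w w' with hlt | hle
    · -- top weight of N exceeds that of m
      have hcm0 : compW ωr w' m = 0 := by
        apply MvPolynomial.ext; intro β
        rw [coeff_compW, coeff_zero]
        by_cases hb : wt ωr β = w'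
        · rw [if_pos hb]
          by_cases hbm : β ∈ m.support
          · exact absurd (hmax β hbm) (by rw [hb]; exact not_le.2 hlt)
          · exact notMem_support_iff.1 hbm
        · rw [if_neg hb]
      have hcg : compW ωr w' (m - N) = - compW ωr w' N := by
        rw [compW_sub, hcm0, zero_sub]
      have hg0 : m - N ≠ 0 := by
        intro h
        rw [h, compW_zero] at hcg
        exact hcN_ne (by rw [← neg_neg (compW ωr w' N), ← hcg, neg_zero])
      have hgle : ∀ α ∈ (m - N).support, wt ωr α ≤ w' := by
        intro α hα
        rcases Finset.mem_union.1 (hsuppg hα) with h1 | h1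
        · exact le_trans (hmax α h1) (le_of_lt hlt)
        · exact hα2max α h1
      have hinit : initialForm ωr (m - N) = - compW ωr w' N := by
        rw [initialForm_eq_compW hgle (by rw [hcg]; exact neg_ne_zero.2 hcN_ne), hcg]
      have hinJ : (- compW ωr w' N : MvPolynomial (Fin n) k) ∈ initialIdealW ωr I := by
        rw [← hinit]
        exact initialForm_mem ωr hmN hg0
      have : compW ωr w' N ∈ initialIdealW ωr I := by
        have := (initialIdealW ωr I).neg_mem hinJ
        rwa [neg_neg] at this
      refine noJ _ this hcN_ne ?_
      intro β hβ
      exact (mem_supp_compW.1 hβ).2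
    · -- w' = w
      have hw'w : w' = w := le_antisymm hle hww'
      rw [hw'w] at hcN_ne
      by_cases hq : compW ωr w (m - N) = 0
      · have : compW ωr w N = compW ωr w m := by
          have h1 := compW_sub ωr w m N
          rw [hq] at h1
          linear_combination h1
        refine noJ _ (this ▸ hcmJ) (this ▸ hcN_ne) ?_
        intro β hβ
        exact (mem_supp_compW.1 hβ).2
      · have hg0 : m - N ≠ 0 := by
          intro h; rw [h, compW_zero] at hq; exact hq rfl
        have hgle : ∀ α ∈ (m - N).support, wt ωr α ≤ w := by
          intro α hα
          rcases Finset.mem_union.1 (hsuppg hα) with h1 | h1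
          · exact hmax α h1
          · rw [← hw'w]; exact hα2max α h1
        have hinit : initialForm ωr (m - N) = compW ωr w (m - N) :=
          initialForm_eq_compW hgle hq
        have hinJ : compW ωr w (m - N) ∈ initialIdealW ωr I := by
          rw [← hinit]
          exact initialForm_mem ωr hmN hg0
        have hNJ : compW ωr w N ∈ initialIdealW ωr I := by
          have h1 := compW_sub ωr w m N
          have : compW ωr w N = compW ωr w m - compW ωr w (m - N) := by
            rw [h1]; ring
          rw [this]
          exact (initialIdealW ωr I).sub_mem hcmJ hinJ
        refine noJ _ hNJ hcN_ne ?_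
        intro β hβ
        exact (mem_supp_compW.1 hβ).2
  -- conclude
  have hαN : coeff α' N = 0 := by
    by_contra h
    exact absurd (hNlt α' (mem_support_iff.2 h)) (lt_irrefl w)
  have hcoeff : coeff α' (m - N) = coeff α' m := by
    rw [coeff_sub, hαN, sub_zero]
  have hIs : t''.IsLeadExp (m - N) α' := by
    constructor
    · rw [mem_support_iff, hcoeff]
      exact mem_support_iff.1 hαmem
    · intro β hβ hne
      have hβ' : β ∈ m.support ∪ N.support := by
        rw [sub_eq_add_neg] at hβ
        rcases Finset.mem_union.1 (MvPolynomial.support_add hβ) with h1 | h1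
        · exact Finset.mem_union_left _ h1
        · rw [MvPolynomial.support_neg] at h1
          exact Finset.mem_union_right _ h1
      rcases Finset.mem_union.1 hβ' with h1 | h1
      · exact (isLeadExp_leadExp t'' hm0).2 β h1 hne
      · rw [ht'']
        exact Or.inl (hNlt β h1)
  rw [TermOrder.leadTerm, TermOrder.leadTerm, leadExp_eq hIs, hcoeff]

end Lifting

/-- Lifting lemma for the Gröbner walk. If `H` is a Gröbner basis of `I`
w.r.t. `t`, `ω` lies in the closed Gröbner cone of `t` for `I`, and `M` is a Gröbner
basis of `in_ω(I)` w.r.t. the refinement `t''` of `ω` by `t'`, then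
`{m - nf_H(m) : m ∈ M}` is a Gröbner basis of `I` w.r.t. `t''`. -/


theorem lifting_lemma {k : Type*} [Field k] (t t' t'' : TermOrder n)
    (I : Ideal (MvPolynomial (Fin n) k)) (H : Finset (MvPolynomial (Fin n) k))
    (hH : IsGroebnerBasis t I H) (h0 : (0 : MvPolynomial (Fin n) k) ∉ H)
    (ω : Fin n → ℚ) (hω : ∀ i, 0 ≤ ω i)
    (ωr : Fin n → ℝ) (hωr : ωr = fun i => (ω i : ℝ))
    (hcone : ωr ∈ closure {v : Fin n → ℝ |
        (∀ i, 0 ≤ v i) ∧ initialIdealW v I = initialIdealT t I})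
    (ht'' : t''.lt = refineLt ωr t')
    (M : Finset (MvPolynomial (Fin n) k))
    (hM : IsGroebnerBasis t'' (initialIdealW ωr I) M)
    (nf : MvPolynomial (Fin n) k → MvPolynomial (Fin n) k)
    (hnf : ∀ m ∈ M, m - nf m ∈ I ∧
        ∀ α ∈ (nf m).support, ∀ h ∈ H, ¬ t.leadExp h ≤ α) :
    (∀ m ∈ M, m - nf m ∈ I) ∧
    Ideal.span ((fun m => t''.leadTerm (m - nf m)) ''
        (M : Set (MvPolynomial (Fin n) k)))
      = initialIdealT t'' I := by
  constructor
  · exact fun m hm => (hnf m hm).1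
  · have hLT : ∀ m ∈ M, t''.leadTerm (m - nf m) = t''.leadTerm m := fun m hm =>
      Lifting.leadTerm_lift hH hcone ht'' (hM.1 m hm) (hnf m hm).1 (hnf m hm).2
    have himg : (fun m => t''.leadTerm (m - nf m)) '' (M : Set (MvPolynomial (Fin n) k))
        = (fun m => t''.leadTerm m) '' (M : Set (MvPolynomial (Fin n) k)) :=
      Set.image_congr fun m hm => hLT m hm
    apply le_antisymm
    · rw [Ideal.span_le]
      rintro x ⟨m, hm, rfl⟩
      beta_reduce
      by_cases h : m - nf m = 0
      · rw [h, Lifting.leadTerm_zero]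
        exact (initialIdealT t'' I).zero_mem
      · exact Ideal.subset_span ⟨m - nf m, (hnf m hm).1, h, rfl⟩
    · rw [initialIdealT, Ideal.span_le]
      rintro x ⟨f, hfI, hf0, rfl⟩
      rw [himg, ← Lifting.leadTerm_initialForm ht'' hf0]
      have h2 : t''.leadTerm (initialForm ωr f) ∈ initialIdealT t'' (initialIdealW ωr I) :=
        Ideal.subset_span ⟨initialForm ωr f, Lifting.initialForm_mem ωr hfI hf0,
          Lifting.initialForm_ne_zero ωr hf0, rfl⟩
      rw [← hM.2] at h2
      exact h2
end

section
/- Let I be a nonzero ideal of k[x_1,...,x_n]. The set {in_<(I) : < a term ordering} of initial ideals of I is finite. -/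
open MvPolynomial

variable {n : ℕ}

section Aux

variable {n : ℕ}

/-- Every nonempty finite set of exponent vectors has a `t`-maximum. -/
lemma TermOrder.finset_max (t : TermOrder n) (s : Finset (Fin n →₀ ℕ)) (hs : s.Nonempty) :
    ∃ β ∈ s, ∀ γ ∈ s, γ ≠ β → t.lt γ β := by
  classical
  induction s using Finset.induction_on with
  | empty => exact absurd hs (by simp)
  | @insert a s _ ih =>
    rcases s.eq_empty_or_nonempty with rfl | hs'
    · exact ⟨a, by simp, by simp⟩
    · obtain ⟨β, hβs, hβ⟩ := ih hs'
      rcases t.trichotomous a β with h | h | h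
      · refine ⟨β, Finset.mem_insert_of_mem hβs, ?_⟩
        intro γ hγ hne
        rcases Finset.mem_insert.1 hγ with rfl | hγs
        · exact h
        · exact hβ γ hγs hne
      · subst h
        refine ⟨a, Finset.mem_insert_self _ _, ?_⟩
        intro γ hγ hne
        rcases Finset.mem_insert.1 hγ with rfl | hγs
        · exact absurd rfl hne
        · exact hβ γ hγs hne
      · refine ⟨a, Finset.mem_insert_self _ _, ?_⟩
        intro γ hγ hne
        rcases Finset.mem_insert.1 hγ with rfl | hγs
        · exact absurd rfl hne
        · by_cases hγβ : γ = β
          · subst hγβ; exact h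
          · exact t.trans _ _ _ (hβ γ hγs hγβ) h

lemma TermOrder.isLeadExp_unique_s13 {k : Type*} [CommSemiring k] (t : TermOrder n)
    {f : MvPolynomial (Fin n) k} {α β : Fin n →₀ ℕ}
    (hα : t.IsLeadExp f α) (hβ : t.IsLeadExp f β) : α = β := by
  by_contra hne
  exact t.irrefl α (t.trans _ _ _ (hβ.2 α hα.1 hne) (hα.2 β hβ.1 (Ne.symm hne)))

lemma TermOrder.isLeadExp_leadExp_s13 {k : Type*} [CommSemiring k] (t : TermOrder n)
    {f : MvPolynomial (Fin n) k} (hf : f ≠ 0) : t.IsLeadExp f (t.leadExp f) := by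
  obtain ⟨α, hα, hmax⟩ := t.finset_max f.support (MvPolynomial.support_nonempty.2 hf)
  have hex : ∃ α, t.IsLeadExp f α := ⟨α, hα, hmax⟩
  rw [TermOrder.leadExp, dif_pos hex]
  exact hex.choose_spec

lemma TermOrder.leadExp_eq {k : Type*} [CommSemiring k] (t : TermOrder n)
    {f : MvPolynomial (Fin n) k} {α : Fin n →₀ ℕ}
    (hα : t.IsLeadExp f α) : t.leadExp f = α := by
  have hf : f ≠ 0 := by
    intro h
    rw [h] at hα
    simp [TermOrder.IsLeadExp] at hα
  exact t.isLeadExp_unique_s13 (t.isLeadExp_leadExp_s13 hf) hα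

/-- Auxiliary data for the ascending-chain argument: `M` is a monomial ideal generated
by fixed leading exponents of a finite subset of `I`, valid for an infinite-image family
of term orders. -/
def GBData {k : Type*} [Field k] (I M : Ideal (MvPolynomial (Fin n) k)) : Prop :=
  ∃ (T : Set (TermOrder n)) (F : Finset (MvPolynomial (Fin n) k))
      (mf : MvPolynomial (Fin n) k → (Fin n →₀ ℕ)),
    {J | ∃ t ∈ T, J = initialIdealT t I}.Infinite ∧
    (∀ g ∈ F, g ∈ I ∧ g ≠ 0) ∧
    (∀ t ∈ T, ∀ g ∈ F, t.IsLeadExp g (mf g)) ∧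
    M = Ideal.span ((fun s => monomial s (1:k)) '' (mf '' ↑F))

end Aux


/-- The key step: any `GBData` monomial ideal can be strictly enlarged. -/
lemma gbdata_step {k : Type*} [Field k] {I M : Ideal (MvPolynomial (Fin n) k)}
    (h : GBData I M) : ∃ M', GBData I M' ∧ M < M' := by
  classical
  obtain ⟨T, F, mf, hTinf, hF, hlead, hMdef⟩ := h
  set S : Set (Fin n →₀ ℕ) := mf '' ↑F with hSdef
  have hmem : ∀ p : MvPolynomial (Fin n) k,
      p ∈ M ↔ ∀ α ∈ p.support, ∃ s ∈ S, s ≤ α := by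
    intro p
    rw [hMdef]
    exact MvPolynomial.mem_ideal_span_monomial_image
  -- restrict to orders whose initial ideal differs from M
  set T₁ : Set (TermOrder n) := {t ∈ T | initialIdealT t I ≠ M} with hT1def
  have hT1inf : {J | ∃ t ∈ T₁, J = initialIdealT t I}.Infinite := by
    refine Set.Infinite.mono ?_ (hTinf.diff (Set.finite_singleton M))
    rintro J ⟨⟨t, ht, rfl⟩, hne⟩
    exact ⟨t, ⟨ht, hne⟩, rfl⟩
  obtain ⟨J0, t0, ht0, rfl⟩ := hT1inf.nonempty
  have ht0T : t0 ∈ T := ht0.1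
  -- M is contained in the initial ideal of t0
  have hMsub : M ≤ initialIdealT t0 I := by
    rw [hMdef]
    refine Ideal.span_le.2 ?_
    rintro p ⟨s, ⟨g, hgF, rfl⟩, rfl⟩
    have hgF' : g ∈ F := hgF
    have hlg := hlead t0 ht0T g hgF'
    have hg0 := (hF g hgF').2
    have hc : MvPolynomial.coeff (mf g) g ≠ 0 := MvPolynomial.mem_support_iff.1 hlg.1
    have hlt : t0.leadTerm g = monomial (mf g) (MvPolynomial.coeff (mf g) g) := by
      rw [TermOrder.leadTerm, t0.leadExp_eq hlg]
    have hmem' : t0.leadTerm g ∈ initialIdealT t0 I :=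
      Ideal.subset_span ⟨g, (hF g hgF').1, hg0, rfl⟩
    have heq : monomial (mf g) (1:k) = C (MvPolynomial.coeff (mf g) g)⁻¹ * t0.leadTerm g := by
      rw [hlt, C_mul_monomial, inv_mul_cancel₀ hc]
    show monomial (mf g) (1:k) ∈ _
    rw [heq]
    exact Ideal.mul_mem_left _ _ hmem'
  -- there is g ∈ I with leading term outside M
  have hex : ∃ g ∈ I, g ≠ 0 ∧ t0.leadTerm g ∉ M := by
    by_contra hall
    push_neg at hall
    refine ht0.2 (le_antisymm ?_ hMsub)
    rw [initialIdealT]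
    refine Ideal.span_le.2 ?_
    rintro p ⟨g, hgI, hg0, rfl⟩
    exact hall g hgI hg0
  obtain ⟨g, hgI, hg0, hgM⟩ := hex
  have hglead := t0.isLeadExp_leadExp_s13 hg0
  have hgexp : ¬ ∃ s ∈ S, s ≤ t0.leadExp g := by
    rintro ⟨s, hs, hsle⟩
    refine hgM ((hmem _).2 ?_)
    intro α hα
    have hc : MvPolynomial.coeff (t0.leadExp g) g ≠ 0 := MvPolynomial.mem_support_iff.1 hglead.1
    rw [TermOrder.leadTerm, MvPolynomial.support_monomial, if_neg hc] at hα
    rw [Finset.mem_singleton] at hα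
    subst hα
    exact ⟨s, hs, hsle⟩
  -- Good polynomials and their reducible monomials
  set Good : MvPolynomial (Fin n) k → Prop :=
    fun f => f ∈ I ∧ f ≠ 0 ∧ ¬ ∃ s ∈ S, s ≤ t0.leadExp f with hGooddef
  set Red : MvPolynomial (Fin n) k → Finset (Fin n →₀ ℕ) :=
    fun f => f.support.filter (fun α => ∃ s ∈ S, s ≤ α) with hReddef
  -- fully reduce: obtain a good polynomial with no reducible monomial
  have hT' : ∃ f, Good f ∧ Red f = ∅ := by
    by_contra hnone
    push_neg at hnone
    set B : Set (Fin n →₀ ℕ) :=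
      {β | ∃ f, Good f ∧ β ∈ Red f ∧ ∀ γ ∈ Red f, γ ≠ β → t0.lt γ β} with hBdef
    have hBne : B.Nonempty := by
      obtain ⟨β, hβ, hmax⟩ := t0.finset_max (Red g)
        (hnone g ⟨hgI, hg0, hgexp⟩)
      exact ⟨β, g, ⟨hgI, hg0, hgexp⟩, hβ, hmax⟩
    obtain ⟨β, ⟨f, hfGood, hβRed, hβmax⟩, hβmin⟩ := t0.wf.has_min B hBne
    obtain ⟨hfI, hf0, hfexp⟩ := hfGood
    have hβsupp : β ∈ f.support := (Finset.mem_filter.1 hβRed).1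
    obtain ⟨s, hsS, hsβ⟩ := (Finset.mem_filter.1 hβRed).2
    obtain ⟨g', hg'F, rfl⟩ := hsS
    have hg'F' : g' ∈ F
    · exact hg'F
    obtain ⟨hg'I, hg'0⟩ := hF g' hg'F'
    have hlg' := hlead t0 ht0T g' hg'F'
    have hc' : MvPolynomial.coeff (mf g') g' ≠ 0 := MvPolynomial.mem_support_iff.1 hlg'.1
    set δ : Fin n →₀ ℕ := β - mf g' with hδdef
    have hδβ : mf g' + δ = β := add_tsub_cancel_of_le hsβ
    set a : k := MvPolynomial.coeff β f * (MvPolynomial.coeff (mf g') g')⁻¹ with hadef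
    set hpoly : MvPolynomial (Fin n) k := monomial δ a * g' with hhdef
    set f'' : MvPolynomial (Fin n) k := f - hpoly with hf''def
    -- coefficient of h at β
    have hcoeffh : ∀ γ, MvPolynomial.coeff γ hpoly ≠ 0 →
        ∃ γ' ∈ g'.support, γ = δ + γ' := by
      intro γ hγ
      rw [hhdef, MvPolynomial.coeff_monomial_mul'] at hγ
      by_cases hle : δ ≤ γ
      · refine ⟨γ - δ, ?_, (add_tsub_cancel_of_le hle).symm ▸ rfl⟩
        rw [if_pos hle] at hγ
        exact MvPolynomial.mem_support_iff.2 fun h => hγ (by rw [h, mul_zero])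
      · rw [if_neg hle] at hγ; exact absurd rfl hγ
    have hsupph : ∀ γ, MvPolynomial.coeff γ hpoly ≠ 0 → γ = β ∨ t0.lt γ β := by
      intro γ hγ
      obtain ⟨γ', hγ', rfl⟩ := hcoeffh γ hγ
      by_cases hγ'eq : γ' = mf g'
      · left; rw [hγ'eq, add_comm]; exact hδβ
      · right
        have h2 := t0.add_right γ' (mf g') δ (hlg'.2 γ' hγ' hγ'eq)
        rw [hδβ] at h2
        rw [add_comm γ' δ] at h2
        exact h2
    -- invariants for f''
    have hLgood := t0.isLeadExp_leadExp_s13 hf0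
    have hβneL : β ≠ t0.leadExp f := by
      intro h
      exact hfexp ⟨mf g', ⟨g', hg'F', rfl⟩, h ▸ hsβ⟩
    have hβL : t0.lt β (t0.leadExp f) := hLgood.2 β hβsupp hβneL
    have hβ' : δ + mf g' = β := by rw [add_comm]; exact hδβ
    have hδle : δ ≤ β := le_iff_exists_add.2 ⟨mf g', hβ'.symm⟩
    have hcoeffβh : MvPolynomial.coeff β hpoly = MvPolynomial.coeff β f := by
      rw [hhdef, MvPolynomial.coeff_monomial_mul', if_pos hδle, ← hβ', add_tsub_cancel_left,
        hβ', hadef, mul_assoc, inv_mul_cancel₀ hc', mul_one]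
    have hcoefff'' : ∀ γ, MvPolynomial.coeff γ f''
        = MvPolynomial.coeff γ f - MvPolynomial.coeff γ hpoly := fun γ => by
      rw [hf''def, MvPolynomial.coeff_sub]
    have hβnot : MvPolynomial.coeff β f'' = 0 := by
      rw [hcoefff'' β, hcoeffβh, sub_self]
    have hLh : MvPolynomial.coeff (t0.leadExp f) hpoly = 0 := by
      by_contra hc0
      rcases hsupph _ hc0 with heq | hltLβ
      · exact hβneL heq.symm
      · exact t0.irrefl _ (t0.trans _ _ _ hltLβ hβL)
    have hLne : MvPolynomial.coeff (t0.leadExp f) f ≠ 0 :=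
      MvPolynomial.mem_support_iff.1 hLgood.1
    have hLf'' : MvPolynomial.coeff (t0.leadExp f) f'' = MvPolynomial.coeff (t0.leadExp f) f := by
      rw [hcoefff'', hLh, sub_zero]
    have hf''0 : f'' ≠ 0 := fun h => hLne (by rw [← hLf'', h, MvPolynomial.coeff_zero])
    have hf''supp : ∀ γ ∈ f''.support,
        γ ∈ f.support ∨ MvPolynomial.coeff γ hpoly ≠ 0 := by
      intro γ hγ
      by_contra hcon
      push_neg at hcon
      have h0 := hcoefff'' γ
      rw [MvPolynomial.notMem_support_iff.1 hcon.1, hcon.2, sub_self] at h0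
      exact MvPolynomial.mem_support_iff.1 hγ h0
    have hf''lead : t0.IsLeadExp f'' (t0.leadExp f) := by
      constructor
      · exact MvPolynomial.mem_support_iff.2 (by rw [hLf'']; exact hLne)
      · intro γ hγ hne
        rcases hf''supp γ hγ with hγf | hγh
        · exact hLgood.2 γ hγf hne
        · rcases hsupph γ hγh with heq | hltγβ
          · rw [heq]; exact hβL
          · exact t0.trans _ _ _ hltγβ hβL
    have hf''I : f'' ∈ I := Ideal.sub_mem I hfI (Ideal.mul_mem_left _ _ hg'I)
    have hf''exp : ¬ ∃ s ∈ S, s ≤ t0.leadExp f'' := by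
      rw [t0.leadExp_eq hf''lead]
      exact hfexp
    have hGf'' : Good f'' := ⟨hf''I, hf''0, hf''exp⟩
    obtain ⟨β'', hβ''Red, hβ''max⟩ := t0.finset_max (Red f'')
      (hnone f'' hGf'')
    have hβ''B : β'' ∈ B := ⟨f'', hGf'', hβ''Red, hβ''max⟩
    refine hβmin β'' hβ''B ?_
    have hβ''supp : β'' ∈ f''.support := (Finset.mem_filter.1 hβ''Red).1
    have hβ''ne : β'' ≠ β := by
      intro h
      exact MvPolynomial.mem_support_iff.1 hβ''supp (h ▸ hβnot)
    rcases hf''supp β'' hβ''supp with hs | hs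
    · exact hβmax β'' (Finset.mem_filter.2 ⟨hs, (Finset.mem_filter.1 hβ''Red).2⟩) hβ''ne
    · rcases hsupph β'' hs with heq | hltβ''β
      · exact absurd heq hβ''ne
      · exact hltβ''β
  -- use the fully reduced polynomial f
  obtain ⟨f, ⟨hfI, hf0, -⟩, hfRed⟩ := hT'
  have hfnored : ∀ α ∈ f.support, ¬ ∃ s ∈ S, s ≤ α := by
    intro α hα hex2
    have hαR : α ∈ Red f := Finset.mem_filter.2 ⟨hα, hex2⟩
    rw [hfRed] at hαR
    exact absurd hαR (Finset.notMem_empty α)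
  -- pick a class of term orders on which the leading exponent of f is constant
  have hclass : ∃ m ∈ f.support,
      {J | ∃ t ∈ {t' ∈ T₁ | t'.leadExp f = m}, J = initialIdealT t I}.Infinite := by
    by_contra hfin2
    push_neg at hfin2
    refine hT1inf ?_
    have hsub : {J | ∃ t ∈ T₁, J = initialIdealT t I} ⊆
        ⋃ m ∈ f.support, {J | ∃ t ∈ {t' ∈ T₁ | t'.leadExp f = m}, J = initialIdealT t I} := by
      rintro J ⟨t, ht, rfl⟩
      have hm : t.leadExp f ∈ f.support := (t.isLeadExp_leadExp_s13 hf0).1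
      exact Set.mem_biUnion hm ⟨t, ⟨ht, rfl⟩, rfl⟩
    exact Set.Finite.subset
      (Set.Finite.biUnion f.support.finite_toSet
        (fun m hm => hfin2 m hm)) hsub
  obtain ⟨m, hmsupp, hT2inf⟩ := hclass
  have hfnotF : f ∉ F := by
    intro hfF
    have hlf := hlead t0 ht0T f hfF
    exact hfnored (mf f) hlf.1 ⟨mf f, ⟨f, hfF, rfl⟩, le_refl _⟩
  set mf' := Function.update mf f m with hmf'def
  have hle : M ≤ Ideal.span ((fun s => monomial s (1:k)) '' (mf' '' ↑(insert f F))) := by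
    rw [hMdef]
    refine Ideal.span_mono (Set.image_mono ?_)
    rintro s ⟨g'', hg''F, rfl⟩
    have hg''F' : g'' ∈ F := hg''F
    refine ⟨g'', Finset.mem_insert_of_mem hg''F', ?_⟩
    rw [hmf'def, Function.update_of_ne (by rintro rfl; exact hfnotF hg''F') _ _]
  refine ⟨Ideal.span ((fun s => monomial s (1:k)) '' (mf' '' ↑(insert f F))), ?_, ?_⟩
  · refine ⟨{t' ∈ T₁ | t'.leadExp f = m}, insert f F, mf', hT2inf, ?_, ?_, rfl⟩
    · intro g'' hg''
      rcases Finset.mem_insert.1 hg'' with rfl | hg''F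
      · exact ⟨hfI, hf0⟩
      · exact hF g'' hg''F
    · intro t ht g'' hg''
      obtain ⟨⟨htT, -⟩, htm⟩ := ht
      rcases Finset.mem_insert.1 hg'' with rfl | hg''F
      · rw [hmf'def, Function.update_self, ← htm]
        exact t.isLeadExp_leadExp_s13 hf0
      · rw [hmf'def, Function.update_of_ne (by rintro rfl; exact hfnotF hg''F) _ _]
        exact hlead t htT g'' hg''F
  · refine lt_of_le_of_ne hle (fun hMeq => ?_)
    have hxm : monomial m (1:k)
        ∈ Ideal.span ((fun s => monomial s (1:k)) '' (mf' '' ↑(insert f F))) :=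
      Ideal.subset_span ⟨m, ⟨f, Finset.mem_insert_self f F,
        by rw [hmf'def, Function.update_self]⟩, rfl⟩
    rw [← hMeq] at hxm
    have hs := (hmem _).1 hxm m (by
      rw [MvPolynomial.support_monomial, if_neg (one_ne_zero (α := k))]
      exact Finset.mem_singleton_self m)
    exact hfnored m hmsupp hs

/-- A nonzero ideal has only finitely many distinct initial ideals as the
term ordering varies. -/
theorem initial_ideals_finite {k : Type*} [Field k]
    (I : Ideal (MvPolynomial (Fin n) k)) (hI : I ≠ ⊥) :
    {J : Ideal (MvPolynomial (Fin n) k) |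
        ∃ t : TermOrder n, J = initialIdealT t I}.Finite := by
  classical
  by_contra hfin
  have hbase : GBData I (⊥ : Ideal (MvPolynomial (Fin n) k)) := by
    refine ⟨Set.univ, ∅, fun _ => 0, ?_, by simp, by simp, by simp⟩
    simpa using hfin
  have hwf : WellFounded ((· > ·) : Ideal (MvPolynomial (Fin n) k) →
      Ideal (MvPolynomial (Fin n) k) → Prop) :=
    isNoetherian_iff.mp inferInstance
  obtain ⟨M, hM, hmax⟩ := hwf.has_min {M | GBData I M} ⟨⊥, hbase⟩
  obtain ⟨M', hM', hlt⟩ := gbdata_step hM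
  exact hmax M' hM' hlt
end
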